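/- arXiv:2004.06702 — 8 statements merged into one kernel-verified Lean document; each statement's English description precedes it below -/
import Mathlib

section
/- For every real number x with 0 ≤ x ≤ 1 and every real number λ > 0, one has 1 - (1-x)^λ ≥ (1/2)·min{1, λx}, where (1-x)^λ denotes the real power of the base 1-x ∈ [0,1]. -/
theorem stmt_0 (x : ℝ) (hx0 : 0 ≤ x) (hx1 : x ≤ 1) (lam : ℝ) (hlam : 0 < lam) :
    1 - (1 - x) ^ lam ≥ (1 / 2) * min 1 (lam * x) := by
  have h1x : (0:ℝ) ≤ 1 - x := by linarith
  -- (1-x)^lam ≤ exp (-(lam*x))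
  have hexp : (1 - x) ^ lam ≤ Real.exp (-(lam * x)) := by
    have h1 : 1 - x ≤ Real.exp (-x) := by
      have := Real.add_one_le_exp (-x); linarith
    calc (1 - x) ^ lam ≤ (Real.exp (-x)) ^ lam :=
          Real.rpow_le_rpow h1x h1 hlam.le
      _ = Real.exp (-(lam * x)) := by
          rw [← Real.exp_one_rpow (-x), ← Real.rpow_mul (Real.exp_pos 1).le,
            Real.exp_one_rpow]
          ring_nf
  rcases le_total (lam * x) 1 with h | h
  · rw [min_eq_right h]
    have ht0 : 0 ≤ lam * x := mul_nonneg hlam.le hx0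
    have hkey : Real.exp (-(lam * x)) ≤ 1 - (lam * x) / 2 := by
      set t := lam * x
      have h1 : t + 1 ≤ Real.exp t := Real.add_one_le_exp t
      have h2 : Real.exp (-t) * Real.exp t = 1 := by
        rw [← Real.exp_add]; simp
      have h3 : 0 < Real.exp t := Real.exp_pos t
      nlinarith [Real.exp_pos (-t)]
    linarith
  · rw [min_eq_left h]
    have hkey : Real.exp (-(lam * x)) ≤ 1 / 2 := by
      have h1 : Real.exp (-(lam * x)) ≤ Real.exp (-1) := by
        apply Real.exp_le_exp.mpr; linarith
      have h2 : (2:ℝ) ≤ Real.exp 1 := by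
        have := Real.add_one_le_exp (1:ℝ); linarith
      have h3 : Real.exp (-1) ≤ 1/2 := by
        rw [Real.exp_neg]
        rw [inv_le_comm₀ (Real.exp_pos 1) (by norm_num)] at *
        linarith
      linarith
    linarith
end

section
/- There exists N ∈ ℕ such that for all natural numbers n ≥ N, all natural numbers k with 2 ≤ k and 4k ≤ n, and every natural number λ with 1 ≤ λ ≤ 2^k·(n/k)^{k/2}: taking p = c = √(k/n) and λ_M = λ_C = λ, one has P(n,k,p,c,λ,λ) ≥ λ²·(k/n)^k / (40·32^k). (Hence, started in the local optimum of Jump_k, the (1+(λ,λ)) GA with these parameters needs an expected number of at most (n/k)^k·e^{O(k)}/λ² iterations, i.e. (n/k)^k·e^{O(k)}/λ fitness evaluations, to reach the global optimum.) -/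
noncomputable def P (n k : ℕ) (p c : ℝ) (lM lC : ℕ) : ℝ :=
  (n.choose k : ℝ) * p ^ k * (1 - p) ^ (n - k) * (1 - (1 - 1 / (n.choose k : ℝ)) ^ lM)
  + ∑ l ∈ Finset.Icc (k + 1) (2 * k - 1),
      (n.choose l : ℝ) * p ^ l * (1 - p) ^ (n - l)
        * (((n - k).choose (l - k) : ℝ) / (n.choose l : ℝ)) ^ lM
        * (1 - (1 - c ^ k * (1 - c) ^ (l - k)) ^ lC)
  + ∑ l ∈ Finset.Icc (2 * k) n,
      (n.choose l : ℝ) * p ^ l * (1 - p) ^ (n - l)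
        * (1 - (1 - ((n - k).choose (l - k) : ℝ) / (n.choose l : ℝ)) ^ lM)
        * (1 - (1 - c ^ k * (1 - c) ^ (l - k)) ^ lC)

namespace Stmt8Aux

open Finset

noncomputable def Bf (n : ℕ) (p : ℝ) (l : ℕ) : ℝ := (n.choose l : ℝ) * p^l * (1-p)^(n-l)

lemma Bf_sum (n : ℕ) (p : ℝ) : ∑ l ∈ range (n+1), Bf n p l = 1 := by
  have h := bernsteinPolynomial.sum ℝ n
  have := congrArg (Polynomial.eval p) h
  simpa [Polynomial.eval_finset_sum, Bf, bernsteinPolynomial] using this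

lemma Bf_var (n : ℕ) (p : ℝ) :
    ∑ l ∈ range (n+1), ((n:ℝ)*p - l)^2 * Bf n p l = n*p*(1-p) := by
  have h := bernsteinPolynomial.variance ℝ n
  have := congrArg (Polynomial.eval p) h
  simpa [Polynomial.eval_finset_sum, Bf, bernsteinPolynomial, mul_assoc, mul_comm,
    mul_left_comm] using this

lemma Bf_nonneg {n : ℕ} {p : ℝ} (hp0 : 0 ≤ p) (hp1 : p ≤ 1) (l : ℕ) : 0 ≤ Bf n p l := by
  have h1 : (0:ℝ) ≤ 1 - p := by linarith
  exact mul_nonneg (mul_nonneg (by positivity) (pow_nonneg hp0 _)) (pow_nonneg h1 _)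

lemma Bf_mass (n : ℕ) (p : ℝ) (hp0 : 0 ≤ p) (hp1 : p ≤ 1) (hμ : 24 ≤ (n:ℝ)*p) :
    (1:ℝ)/3 ≤ ∑ l ∈ (range (n+1)).filter
      (fun l : ℕ => 3/4*((n:ℝ)*p) ≤ (l:ℝ) ∧ (l:ℝ) ≤ 5/4*((n:ℝ)*p)), Bf n p l := by
  classical
  set μ := (n:ℝ)*p with hμdef
  have hμ0 : (0:ℝ) < μ := by linarith
  set cond : ℕ → Prop := fun l : ℕ => 3/4*μ ≤ (l:ℝ) ∧ (l:ℝ) ≤ 5/4*μ with hcond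
  have hvar : ∑ l ∈ range (n+1), (μ - l)^2 * Bf n p l ≤ μ := by
    have h := Bf_var n p
    rw [← hμdef] at h
    rw [h]; nlinarith [hp0, hp1, hμ]
  have hTsub : (range (n+1)).filter (fun l => ¬ cond l) ⊆ range (n+1) := Finset.filter_subset _ _
  have hT : ∑ l ∈ (range (n+1)).filter (fun l => ¬ cond l), Bf n p l ≤ 16/μ := by
    have h4 : (0:ℝ) < (μ/4)^2 := by positivity
    have key : (μ/4)^2 * ∑ l ∈ (range (n+1)).filter (fun l => ¬ cond l), Bf n p l ≤ μ := by
      rw [Finset.mul_sum]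
      refine le_trans (Finset.sum_le_sum ?_)
        (le_trans (Finset.sum_le_sum_of_subset_of_nonneg hTsub ?_) hvar)
      · intro l hl
        rw [Finset.mem_filter] at hl
        have hnc : ¬ cond l := hl.2
        have hnc' : ¬ (3/4*μ ≤ (l:ℝ) ∧ (l:ℝ) ≤ 5/4*μ) := hnc
        push_neg at hnc'
        have hB := Bf_nonneg hp0 hp1 l (n := n)
        have h1 : (μ/4)^2 ≤ (μ - l)^2 := by
          rcases lt_or_ge ((l:ℝ)) (3/4*μ) with h | h
          · nlinarith
          · have h2 := hnc' h; nlinarith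
        exact mul_le_mul_of_nonneg_right h1 hB
      · intro l _ _
        exact mul_nonneg (sq_nonneg _) (Bf_nonneg hp0 hp1 l)
    have heq : (16:ℝ)/μ = μ/((μ/4)^2) := by field_simp; ring
    rw [heq, le_div_iff₀ h4]
    nlinarith [key]
  have hsplit := Finset.sum_filter_add_sum_filter_not (range (n+1)) cond (Bf n p)
  have hsum := Bf_sum n p
  have h16 : 16/μ ≤ 2/3 := by
    rw [div_le_div_iff₀ hμ0 (by norm_num)]; linarith
  linarith [hsplit, hsum, hT, h16]

lemma Bf_step (n : ℕ) (p : ℝ) (l : ℕ) (hl : l < n) :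
    Bf n p (l+1) * ((l+1) * (1-p)) = Bf n p l * ((n - l : ℕ) * p) := by
  have h1 : n - (l+1) + 1 = n - l := by omega
  have h2 : (n.choose (l+1) * (l+1) : ℝ) = (n.choose l : ℝ) * (n - l : ℕ) := by
    exact_mod_cast congrArg (Nat.cast : ℕ → ℝ) (Nat.choose_succ_right_eq n l)
  calc Bf n p (l+1) * ((l+1) * (1-p))
      = ((n.choose (l+1) * (l+1) : ℝ)) * p^(l+1) * ((1-p)^(n-(l+1)) * (1-p)) := by
        unfold Bf; ring
    _ = ((n.choose l : ℝ) * (n - l : ℕ)) * p^(l+1) * (1-p)^(n-l) := by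
        rw [h2, ← pow_succ, h1]
    _ = Bf n p l * ((n - l : ℕ) * p) := by unfold Bf; ring

lemma Bf_mode (n : ℕ) (p : ℝ) (hp0 : 0 ≤ p) (hp1 : p < 1) (hn : 0 < n) :
    ∀ l ≤ n, Bf n p l ≤ Bf n p (Nat.floor ((n+1:ℝ)*p)) := by
  set m := Nat.floor ((n+1:ℝ)*p) with hm
  have hmp : (m:ℝ) ≤ (n+1:ℝ)*p := Nat.floor_le (by positivity)
  have hmp2 : (n+1:ℝ)*p < m + 1 := Nat.lt_floor_add_one _
  have hmn : m ≤ n := by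
    have h1 : (n+1:ℝ)*p < ((n+1 : ℕ) : ℝ) := by push_cast; nlinarith
    have h2 : m < n + 1 := (Nat.floor_lt (by positivity)).2 h1
    omega
  have up : ∀ l, l + 1 ≤ m → Bf n p l ≤ Bf n p (l+1) := by
    intro l hlm
    have hln : l < n := by omega
    have hcast : ((l:ℝ)+1) ≤ (n+1:ℝ)*p := by
      have : ((l+1 : ℕ) : ℝ) ≤ (m:ℝ) := by exact_mod_cast hlm
      push_cast at this; linarith
    have hnl : ((l:ℝ)+1)*(1-p) ≤ ((n - l : ℕ):ℝ) * p := by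
      have : ((n - l : ℕ):ℝ) = (n:ℝ) - l := by rw [Nat.cast_sub hln.le]
      rw [this]; nlinarith
    have hstep := Bf_step n p l hln
    have hpos : (0:ℝ) < ((l:ℝ)+1)*(1-p) := by
      have : (0:ℝ) < 1 - p := by linarith
      positivity
    have hB := Bf_nonneg hp0 hp1.le l (n := n)
    have hB2 := Bf_nonneg hp0 hp1.le (l+1) (n := n)
    have : Bf n p l * (((l:ℝ)+1)*(1-p)) ≤ Bf n p (l+1) * (((l:ℝ)+1)*(1-p)) := by
      push_cast at hstep ⊢
      nlinarith [hstep, mul_le_mul_of_nonneg_left hnl hB]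
    exact le_of_mul_le_mul_right this hpos
  have down : ∀ l, m ≤ l → l < n → Bf n p (l+1) ≤ Bf n p l := by
    intro l hml hln
    have hcast : (n+1:ℝ)*p ≤ ((l:ℝ)+1) := by
      have : (m:ℝ) ≤ (l:ℝ) := by exact_mod_cast hml
      linarith
    have hnl : ((n - l : ℕ):ℝ) * p ≤ ((l:ℝ)+1)*(1-p) := by
      have hc : ((n - l : ℕ):ℝ) = (n:ℝ) - l := by rw [Nat.cast_sub hln.le]
      rw [hc]; nlinarith
    have hstep := Bf_step n p l hln
    have hpos : (0:ℝ) < ((l:ℝ)+1)*(1-p) := by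
      have : (0:ℝ) < 1 - p := by linarith
      positivity
    have hB := Bf_nonneg hp0 hp1.le l (n := n)
    have : Bf n p (l+1) * (((l:ℝ)+1)*(1-p)) ≤ Bf n p l * (((l:ℝ)+1)*(1-p)) := by
      push_cast at hstep ⊢
      nlinarith [hstep, mul_le_mul_of_nonneg_left hnl hB]
    exact le_of_mul_le_mul_right this hpos
  have upall : ∀ d l, l + d = m → Bf n p l ≤ Bf n p m := by
    intro d
    induction d with
    | zero => intro l h; simp [← h]
    | succ d ih =>
      intro l h
      have h1 : l + 1 ≤ m := by omega
      exact le_trans (up l h1) (ih (l+1) (by omega))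
  have downall : ∀ d l, l = m + d → l ≤ n → Bf n p l ≤ Bf n p m := by
    intro d
    induction d with
    | zero => intro l h _; simp [h]
    | succ d ih =>
      intro l h hln
      have h2 : Bf n p (m + d + 1) ≤ Bf n p (m + d) := by
        apply down (m + d) (by omega) (by omega)
      have := ih (m+d) rfl (by omega)
      calc Bf n p l = Bf n p (m + d + 1) := by rw [h, Nat.add_assoc]
        _ ≤ Bf n p (m + d) := h2
        _ ≤ Bf n p m := this
  intro l hln
  rcases le_or_gt l m with h | h
  · exact upall (m - l) l (by omega)
  · exact downall (l - m) l (by omega) hln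

lemma Bf_mode_ge (n : ℕ) (p : ℝ) (hp0 : 0 ≤ p) (hp1 : p < 1) (hn : 0 < n) :
    1 ≤ ((n:ℝ)+1) * Bf n p (Nat.floor ((n+1:ℝ)*p)) := by
  have h := Bf_sum n p
  have hmode := Bf_mode n p hp0 hp1 hn
  have : ∑ l ∈ range (n+1), Bf n p l ≤ ∑ _l ∈ range (n+1), Bf n p (Nat.floor ((n+1:ℝ)*p)) := by
    apply Finset.sum_le_sum
    intro l hl
    exact hmode l (by simpa using Nat.lt_succ_iff.mp (Finset.mem_range.mp hl))
  rw [h, Finset.sum_const, Finset.card_range] at this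
  have : (1:ℝ) ≤ (n+1) • Bf n p (Nat.floor ((n+1:ℝ)*p)) := this
  rw [nsmul_eq_mul] at this
  push_cast at this ⊢
  linarith

lemma one_sub_pow_lb {x : ℝ} (hx0 : 0 ≤ x) (hx1 : x ≤ 1) (lam : ℕ) (hlx : (lam:ℝ)*x ≤ 1) :
    (lam:ℝ)*x/2 ≤ 1 - (1-x)^lam := by
  have hB : 1 + (lam:ℝ)*x ≤ (1+x)^lam := one_add_mul_le_pow (by linarith) lam
  have h1x : (0:ℝ) ≤ 1 - x := by linarith
  have hprod : (1-x)^lam * (1+x)^lam = (1-x^2)^lam := by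
    rw [← mul_pow]; ring_nf
  have h1 : (1-x^2)^lam ≤ 1 := pow_le_one₀ (by nlinarith) (by nlinarith)
  have h2 : (1 + (lam:ℝ)*x) * (1-x)^lam ≤ 1 := by
    calc (1 + (lam:ℝ)*x) * (1-x)^lam ≤ (1+x)^lam * (1-x)^lam :=
          mul_le_mul_of_nonneg_right hB (pow_nonneg h1x _)
      _ = (1-x^2)^lam := by rw [mul_comm]; exact hprod
      _ ≤ 1 := h1
  have hu : (0:ℝ) ≤ (1-x)^lam := pow_nonneg h1x _
  have ht : (0:ℝ) ≤ (lam:ℝ)*x := by positivity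
  nlinarith [h2, hu, ht, hlx]

lemma factor_lb {y ylo : ℝ} (lam : ℕ) (h0 : 0 ≤ ylo) (h1 : ylo ≤ y) (h2 : y ≤ 1)
    (h3 : (lam:ℝ)*ylo ≤ 1) : (lam:ℝ)*ylo/2 ≤ 1 - (1-y)^lam := by
  have hlb := one_sub_pow_lb h0 (le_trans h1 h2) lam h3
  have hmono : (1-y)^lam ≤ (1-ylo)^lam := by
    apply pow_le_pow_left₀ (by linarith) (by linarith)
  linarith

lemma chord {c : ℝ} (h0 : 0 ≤ c) (h2 : c ≤ 1/2) : (2:ℝ) ^ (-(2*c)) ≤ 1 - c := by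
  have := Real.geom_mean_le_arith_mean2_weighted (by linarith : (0:ℝ) ≤ 1 - 2*c)
    (by linarith : (0:ℝ) ≤ 2*c) (by norm_num : (0:ℝ) ≤ 1) (by norm_num : (0:ℝ) ≤ 1/2)
    (by ring)
  rw [Real.one_rpow, one_mul] at this
  have heq : ((1:ℝ)/2) ^ (2*c) = (2:ℝ) ^ (-(2*c)) := by
    rw [Real.rpow_neg (by norm_num), ← Real.inv_rpow (by norm_num)]
    norm_num
  rw [heq] at this
  linarith

lemma one_sub_pow_ge {c : ℝ} (h0 : 0 ≤ c) (h2 : c ≤ 1/2) (j : ℕ) (E : ℝ)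
    (hE : 2*c*(j:ℝ) ≤ E) : (2:ℝ) ^ (-E) ≤ (1-c)^j := by
  have hb : (2:ℝ) ^ (-(2*c)) ≤ 1 - c := chord h0 h2
  have hbn : (0:ℝ) ≤ (2:ℝ) ^ (-(2*c)) := Real.rpow_nonneg (by norm_num) _
  have h1 : ((2:ℝ) ^ (-(2*c)))^j ≤ (1-c)^j := pow_le_pow_left₀ hbn hb j
  have h2' : ((2:ℝ) ^ (-(2*c)))^j = (2:ℝ) ^ (-(2*c)*(j:ℝ)) := by
    rw [← Real.rpow_natCast ((2:ℝ) ^ (-(2*c))) j, ← Real.rpow_mul (by norm_num)]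
  have h3 : (2:ℝ) ^ (-E) ≤ (2:ℝ) ^ (-(2*c)*(j:ℝ)) := by
    apply Real.rpow_le_rpow_of_exponent_le (by norm_num)
    nlinarith
  rw [h2'] at h1
  linarith

lemma two_rpow_neg_nat (a : ℕ) : (2:ℝ) ^ (-(a:ℝ)) = ((2:ℝ)^a)⁻¹ := by
  rw [Real.rpow_neg (by norm_num), Real.rpow_natCast]

lemma q_le_one {n k l : ℕ} (hkl : k ≤ l) (hln : l ≤ n) :
    (((n-k).choose (l-k) : ℝ)) / (n.choose l : ℝ) ≤ 1 := by
  have hid := Nat.choose_mul (n := n) hkl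
  have hpos : 0 < n.choose k := Nat.choose_pos (hkl.trans hln)
  have hle : (n-k).choose (l-k) ≤ n.choose l := by
    have h1 : n.choose k * ((n-k).choose (l-k)) ≤ n.choose k * (n.choose l) := by
      rw [← hid]
      calc n.choose l * l.choose k ≤ n.choose l * n.choose k :=
            Nat.mul_le_mul_left _ (Nat.choose_le_choose k hln)
        _ = n.choose k * n.choose l := Nat.mul_comm _ _
    exact Nat.le_of_mul_le_mul_left h1 hpos
  have hpos2 : (0:ℝ) < (n.choose l : ℝ) := by
    exact_mod_cast Nat.choose_pos hln
  rw [div_le_one hpos2]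
  exact_mod_cast hle

lemma q_ge {n k l : ℕ} (hn : 0 < n) (hkl : k ≤ l) (hln : l ≤ n) :
    ((l-k:ℕ):ℝ)^k / (n:ℝ)^k ≤ (((n-k).choose (l-k) : ℝ)) / (n.choose l : ℝ) := by
  have hid := Nat.choose_mul (n := n) hkl
  have hposnl : (0:ℝ) < (n.choose l : ℝ) := by exact_mod_cast Nat.choose_pos hln
  have hposnk : (0:ℝ) < (n.choose k : ℝ) := by exact_mod_cast Nat.choose_pos (hkl.trans hln)
  have hqeq : (((n-k).choose (l-k) : ℝ)) / (n.choose l : ℝ)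
      = (l.choose k : ℝ)/(n.choose k : ℝ) := by
    rw [div_eq_div_iff hposnl.ne' hposnk.ne']
    have := congrArg (Nat.cast : ℕ → ℝ) hid
    push_cast at this
    linarith [this]
  rw [hqeq]
  have hd1 : (l + 1 - k)^k ≤ l.descFactorial k := Nat.pow_sub_le_descFactorial l k
  have hd2 : n.descFactorial k ≤ n^k := Nat.descFactorial_le_pow n k
  have he1 : l.descFactorial k = k.factorial * l.choose k :=
    Nat.descFactorial_eq_factorial_mul_choose l k
  have he2 : n.descFactorial k = k.factorial * n.choose k :=
    Nat.descFactorial_eq_factorial_mul_choose n k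
  have hnp : (0:ℝ) < (n:ℝ)^k := pow_pos (by exact_mod_cast hn) k
  rw [div_le_div_iff₀ hnp hposnk]
  have hnat : (l - k)^k * (k.factorial * n.choose k) ≤ (k.factorial * l.choose k) * n^k := by
    calc (l - k)^k * (k.factorial * n.choose k)
        ≤ (l + 1 - k)^k * (k.factorial * n.choose k) := by
          apply Nat.mul_le_mul_right
          apply Nat.pow_le_pow_left; omega
      _ ≤ l.descFactorial k * (k.factorial * n.choose k) := Nat.mul_le_mul_right _ (he1 ▸ hd1)
      _ = (k.factorial * l.choose k) * (n.descFactorial k) := by rw [he1, he2]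
      _ ≤ (k.factorial * l.choose k) * n^k := Nat.mul_le_mul_left _ hd2
  have hnat2 : (l - k)^k * n.choose k ≤ l.choose k * n^k := by
    apply Nat.le_of_mul_le_mul_left _ (Nat.factorial_pos k)
    calc k.factorial * ((l - k)^k * n.choose k)
        = (l - k)^k * (k.factorial * n.choose k) := by ring
      _ ≤ (k.factorial * l.choose k) * n^k := hnat
      _ = k.factorial * (l.choose k * n^k) := by ring
  exact_mod_cast hnat2

lemma eight_mul_le_two_pow : ∀ k : ℕ, 6 ≤ k → 8*k ≤ 2^k := by
  intro k hk
  induction k with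
  | zero => omega
  | succ k ih =>
    rcases Nat.lt_or_ge k 6 with h | h
    · interval_cases k <;> simp_all <;> omega
    · have := ih (by omega)
      have h8 : 8 ≤ 2^k := le_trans (by omega) this
      calc 8*(k+1) = 8*k + 8 := by ring
        _ ≤ 2^k + 2^k := by omega
        _ = 2^(k+1) := by ring

end Stmt8Aux

set_option maxHeartbeats 8000000 in
theorem stmt_8 : ∃ N : ℕ, ∀ n : ℕ, N ≤ n → ∀ k : ℕ, 2 ≤ k → 4 * k ≤ n →
    ∀ lam : ℕ, 1 ≤ lam → (lam : ℝ) ≤ 2 ^ k * ((n : ℝ) / (k : ℝ)) ^ ((k : ℝ) / 2) →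
    P n k (Real.sqrt ((k : ℝ) / (n : ℝ))) (Real.sqrt ((k : ℝ) / (n : ℝ))) lam lam
      ≥ (lam : ℝ) ^ 2 * ((k : ℝ) / (n : ℝ)) ^ k / (40 * 32 ^ k) := by
  classical
  open Stmt8Aux Finset in
  refine ⟨1000, ?_⟩
  intro n hn k hk hkn lam hlam1 hlam2
  have hnn : (0:ℕ) < n := by omega
  have hn0 : (0:ℝ) < n := by exact_mod_cast hnn
  have hk0 : (0:ℝ) < k := by exact_mod_cast (by omega : 0 < k)
  have hkR : (2:ℝ) ≤ (k:ℝ) := by exact_mod_cast hk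
  have hknR : 4*(k:ℝ) ≤ n := by exact_mod_cast hkn
  have hnR : (1000:ℝ) ≤ n := by exact_mod_cast hn
  set x := (k:ℝ)/(n:ℝ) with hxdef
  have hx0 : 0 < x := by positivity
  have hx4 : x ≤ 1/4 := by rw [hxdef, div_le_iff₀ hn0]; linarith
  set p := Real.sqrt x with hpdef
  have hp0 : 0 ≤ p := Real.sqrt_nonneg _
  have hp2 : p^2 = x := Real.sq_sqrt hx0.le
  have hppos : 0 < p := Real.sqrt_pos.2 hx0
  have hphalf : p ≤ 1/2 := by nlinarith [hp2, hx4, hp0]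
  have hp1 : p < 1 := lt_of_le_of_lt hphalf (by norm_num)
  have hβ : (0:ℝ) < p^k := pow_pos hppos k
  -- convert the rpow hypothesis
  have hlamβ : (lam:ℝ) * p^k ≤ 2^k := by
    have h1 : ((n:ℝ)/(k:ℝ)) = x⁻¹ := by rw [hxdef]; field_simp
    have h2 : (x⁻¹ : ℝ) ^ ((k:ℝ)/2) = (p^k)⁻¹ := by
      rw [show (k:ℝ)/2 = (1/2)*(k:ℝ) by ring, Real.rpow_mul (inv_nonneg.2 hx0.le),
        ← Real.sqrt_eq_rpow, Real.sqrt_inv, ← hpdef, Real.rpow_natCast, inv_pow]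
    rw [h1, h2] at hlam2
    have := mul_le_mul_of_nonneg_right hlam2 hβ.le
    rw [mul_assoc, inv_mul_cancel₀ hβ.ne', mul_one] at this
    exact this
  -- the mean
  set μ := (n:ℝ)*p with hμdef
  have hμp : μ * p = k := by
    rw [hμdef, mul_assoc, ← sq, hp2, hxdef]; field_simp
  have hμ0 : 0 < μ := by positivity
  have hμsq : μ^2 = n*k := by
    rw [hμdef, mul_pow, hp2, hxdef]; field_simp
  have hμ2k : 2*(k:ℝ) ≤ μ := by nlinarith [hμsq, hμ0, hknR, hk0]
  have hμ24 : 24 ≤ μ := by nlinarith [hμsq, hμ0, hkR, hnR]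
  -- per-term lower bound
  have key : ∀ l : ℕ, 2*k ≤ l → l ≤ n → (k:ℝ) + μ/4 ≤ l → ∀ E : ℝ,
      2*p*((l-k:ℕ):ℝ) ≤ E → (2:ℝ)^k * (2:ℝ)^(-E) ≤ 1 →
      Bf n p l * ((lam:ℝ)*((p/4)^k)/2) * ((lam:ℝ)*(p^k*(2:ℝ)^(-E))/2)
        ≤ (n.choose l : ℝ) * p ^ l * (1 - p) ^ (n - l)
            * (1 - (1 - ((n - k).choose (l - k) : ℝ) / (n.choose l : ℝ)) ^ lam)
            * (1 - (1 - p ^ k * (1 - p) ^ (l - k)) ^ lam) := by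
    intro l h2kl hln hl4 E hE hE1
    show Bf n p l * ((lam:ℝ)*((p/4)^k)/2) * ((lam:ℝ)*(p^k*(2:ℝ)^(-E))/2)
        ≤ Bf n p l * (1 - (1 - ((n-k).choose (l-k) : ℝ)/(n.choose l : ℝ))^lam)
            * (1 - (1 - p^k*(1-p)^(l-k))^lam)
    have hkl : k ≤ l := by omega
    have hrpE : (0:ℝ) ≤ (2:ℝ)^(-E) := Real.rpow_nonneg (by norm_num) _
    have hcastlk : ((l-k:ℕ):ℝ) = (l:ℝ) - k := by
      rw [Nat.cast_sub hkl]
    -- first factor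
    have hQlo0 : (0:ℝ) ≤ (p/4)^k := by positivity
    have hq1 : (p/4)^k ≤ ((l-k:ℕ):ℝ)^k / (n:ℝ)^k := by
      rw [← div_pow]
      apply pow_le_pow_left₀ (by positivity)
      rw [hcastlk, le_div_iff₀ hn0]
      calc p/4*n = μ/4 := by rw [hμdef]; ring
        _ ≤ (l:ℝ) - k := by linarith
    have hq2 : ((l-k:ℕ):ℝ)^k / (n:ℝ)^k ≤ ((n-k).choose (l-k) : ℝ)/(n.choose l : ℝ) :=
      q_ge hnn hkl hln
    have hqle1 : ((n-k).choose (l-k) : ℝ)/(n.choose l : ℝ) ≤ 1 := q_le_one hkl hln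
    have hlQ : (lam:ℝ)*((p/4)^k) ≤ 1 := by
      have h44 : (p/4)^k = p^k/4^k := div_pow p 4 k
      rw [h44]
      rw [mul_div_assoc'] 
      rw [div_le_one (by positivity)]
      calc (lam:ℝ)*p^k ≤ 2^k := hlamβ
        _ ≤ 4^k := by apply pow_le_pow_left₀ (by norm_num) (by norm_num)
    have hF1 : (lam:ℝ)*((p/4)^k)/2 ≤ 1 - (1 - ((n-k).choose (l-k) : ℝ)/(n.choose l : ℝ))^lam :=
      factor_lb lam hQlo0 (le_trans hq1 hq2) hqle1 hlQ
    -- second factor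
    have hRlo0 : (0:ℝ) ≤ p^k*(2:ℝ)^(-E) := by positivity
    have hr1 : p^k*(2:ℝ)^(-E) ≤ p^k*(1-p)^(l-k) := by
      apply mul_le_mul_of_nonneg_left _ hβ.le
      exact one_sub_pow_ge hp0 hphalf (l-k) E hE
    have hrle1 : p^k*(1-p)^(l-k) ≤ 1 := by
      have h1 : p^k ≤ 1 := pow_le_one₀ hp0 hp1.le
      have h2 : (1-p)^(l-k) ≤ 1 := pow_le_one₀ (by linarith) (by linarith)
      nlinarith [pow_nonneg hp0 k, pow_nonneg (by linarith : (0:ℝ) ≤ 1-p) (l-k)]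
    have hlR : (lam:ℝ)*(p^k*(2:ℝ)^(-E)) ≤ 1 := by
      calc (lam:ℝ)*(p^k*(2:ℝ)^(-E)) = ((lam:ℝ)*p^k)*(2:ℝ)^(-E) := by ring
        _ ≤ 2^k*(2:ℝ)^(-E) := mul_le_mul_of_nonneg_right hlamβ hrpE
        _ ≤ 1 := hE1
    have hF2 : (lam:ℝ)*(p^k*(2:ℝ)^(-E))/2 ≤ 1 - (1 - p^k*(1-p)^(l-k))^lam :=
      factor_lb lam hRlo0 hr1 hrle1 hlR
    -- combine
    have hBf : 0 ≤ Bf n p l := Bf_nonneg hp0 hp1.le l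
    have ha : (0:ℝ) ≤ (lam:ℝ)*((p/4)^k)/2 := by positivity
    have hb : (0:ℝ) ≤ (lam:ℝ)*(p^k*(2:ℝ)^(-E))/2 := by positivity
    calc Bf n p l * ((lam:ℝ)*((p/4)^k)/2) * ((lam:ℝ)*(p^k*(2:ℝ)^(-E))/2)
        ≤ Bf n p l * (1 - (1 - ((n-k).choose (l-k) : ℝ)/(n.choose l : ℝ))^lam)
            * ((lam:ℝ)*(p^k*(2:ℝ)^(-E))/2) := by
          apply mul_le_mul_of_nonneg_right _ hb
          exact mul_le_mul_of_nonneg_left hF1 hBf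
      _ ≤ Bf n p l * (1 - (1 - ((n-k).choose (l-k) : ℝ)/(n.choose l : ℝ))^lam)
            * (1 - (1 - p^k*(1-p)^(l-k))^lam) := by
          apply mul_le_mul_of_nonneg_left hF2
          exact mul_nonneg hBf (by linarith [hF1, ha])
  -- P dominates any partial sum of the third series
  have hPlow : ∀ S : Finset ℕ, S ⊆ Finset.Icc (2*k) n →
      ∑ l ∈ S, ((n.choose l : ℝ) * p ^ l * (1 - p) ^ (n - l)
          * (1 - (1 - ((n - k).choose (l - k) : ℝ) / (n.choose l : ℝ)) ^ lam)
          * (1 - (1 - p ^ k * (1 - p) ^ (l - k)) ^ lam))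
        ≤ P n k p p lam lam := by
    intro S hS
    have term_nonneg : ∀ l ∈ Finset.Icc (2*k) n, 0 ≤ (n.choose l : ℝ) * p ^ l * (1 - p) ^ (n - l)
        * (1 - (1 - ((n - k).choose (l - k) : ℝ) / (n.choose l : ℝ)) ^ lam)
        * (1 - (1 - p ^ k * (1 - p) ^ (l - k)) ^ lam) := by
      intro l hl
      rw [Finset.mem_Icc] at hl
      have hkl : k ≤ l := by omega
      have hq0 : (0:ℝ) ≤ ((n-k).choose (l-k) : ℝ)/(n.choose l : ℝ) := by positivity
      have hq1 := q_le_one hkl hl.2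
      have hr0 : (0:ℝ) ≤ p^k*(1-p)^(l-k) := by
        exact mul_nonneg (pow_nonneg hp0 _) (pow_nonneg (by linarith) _)
      have hr1 : p^k*(1-p)^(l-k) ≤ 1 := by
        have h1 : p^k ≤ 1 := pow_le_one₀ hp0 hp1.le
        have h2 : (1-p)^(l-k) ≤ 1 := pow_le_one₀ (by linarith) (by linarith)
        nlinarith [pow_nonneg hp0 k, pow_nonneg (by linarith : (0:ℝ) ≤ 1-p) (l-k)]
      have hA : (1 - ((n-k).choose (l-k) : ℝ)/(n.choose l : ℝ))^lam ≤ 1 :=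
        pow_le_one₀ (by linarith) (by linarith)
      have hB : (1 - p^k*(1-p)^(l-k))^lam ≤ 1 := pow_le_one₀ (by linarith) (by linarith)
      have hBn := Bf_nonneg (n := n) hp0 hp1.le l
      unfold Bf at hBn
      apply mul_nonneg (mul_nonneg hBn (by linarith)) (by linarith)
    have h3 : ∑ l ∈ S, ((n.choose l : ℝ) * p ^ l * (1 - p) ^ (n - l)
          * (1 - (1 - ((n - k).choose (l - k) : ℝ) / (n.choose l : ℝ)) ^ lam)
          * (1 - (1 - p ^ k * (1 - p) ^ (l - k)) ^ lam))
        ≤ ∑ l ∈ Finset.Icc (2*k) n, ((n.choose l : ℝ) * p ^ l * (1 - p) ^ (n - l)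
          * (1 - (1 - ((n - k).choose (l - k) : ℝ) / (n.choose l : ℝ)) ^ lam)
          * (1 - (1 - p ^ k * (1 - p) ^ (l - k)) ^ lam)) :=
      Finset.sum_le_sum_of_subset_of_nonneg hS (fun l hl _ => term_nonneg l hl)
    have hT1 : (0:ℝ) ≤ (n.choose k : ℝ) * p ^ k * (1 - p) ^ (n - k)
        * (1 - (1 - 1 / (n.choose k : ℝ)) ^ lam) := by
      have hc1 : (1:ℝ) ≤ (n.choose k : ℝ) := by
        exact_mod_cast Nat.one_le_iff_ne_zero.2 (Nat.choose_pos (by omega : k ≤ n)).ne'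
      have h0 : (0:ℝ) ≤ 1 - 1/(n.choose k : ℝ) := by
        have : 1/(n.choose k : ℝ) ≤ 1 := by
          rw [div_le_one (by linarith)]; linarith
        linarith
      have h1 : (1 - 1/(n.choose k : ℝ))^lam ≤ 1 := by
        apply pow_le_one₀ h0
        have : (0:ℝ) < 1/(n.choose k : ℝ) := by positivity
        linarith
      apply mul_nonneg _ (by linarith)
      exact mul_nonneg (mul_nonneg (by positivity) (pow_nonneg hp0 _))
        (pow_nonneg (by linarith) _)
    have hT2 : (0:ℝ) ≤ ∑ l ∈ Finset.Icc (k+1) (2*k-1),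
        (n.choose l : ℝ) * p ^ l * (1 - p) ^ (n - l)
          * (((n - k).choose (l - k) : ℝ) / (n.choose l : ℝ)) ^ lam
          * (1 - (1 - p ^ k * (1 - p) ^ (l - k)) ^ lam) := by
      apply Finset.sum_nonneg
      intro l _
      have hr0 : (0:ℝ) ≤ p^k*(1-p)^(l-k) :=
        mul_nonneg (pow_nonneg hp0 _) (pow_nonneg (by linarith) _)
      have hr1 : p^k*(1-p)^(l-k) ≤ 1 := by
        have h1 : p^k ≤ 1 := pow_le_one₀ hp0 hp1.le
        have h2 : (1-p)^(l-k) ≤ 1 := pow_le_one₀ (by linarith) (by linarith)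
        nlinarith [pow_nonneg hp0 k, pow_nonneg (by linarith : (0:ℝ) ≤ 1-p) (l-k)]
      have hB : (1 - p^k*(1-p)^(l-k))^lam ≤ 1 := pow_le_one₀ (by linarith) (by linarith)
      apply mul_nonneg _ (by linarith)
      apply mul_nonneg _ (by positivity)
      exact mul_nonneg (mul_nonneg (by positivity) (pow_nonneg hp0 _))
        (pow_nonneg (by linarith) _)
    unfold P
    linarith [h3, hT1, hT2]
  have hxk : x^k = p^k * p^k := by
    rw [← hp2, ← pow_add, ← pow_mul, two_mul]
  have h4pos : (0:ℝ) < (4:ℝ)^k := by positivity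
  have h8pos : (0:ℝ) < (8:ℝ)^k := by positivity
  have h2pos : (0:ℝ) < (2:ℝ)^k := by positivity
  have h32 : (32:ℝ)^k = 4^k*8^k := by rw [← mul_pow]; norm_num
  have h16 : (16:ℝ)^k = 4^k*4^k := by rw [← mul_pow]; norm_num
  have hL1 : (1:ℝ) ≤ (lam:ℝ) := by exact_mod_cast hlam1
  rw [ge_iff_le]
  rcases le_or_gt (8*k) n with h8 | h8
  · -- regime 1 : Chebyshev window
    have h8R : 8*(k:ℝ) ≤ n := by exact_mod_cast h8
    have h2k3 : 2*(k:ℝ) ≤ 3/4*μ := by nlinarith [hμsq, hμ0, hk0]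
    have hmass := Bf_mass n p hp0 hp1.le (by rw [← hμdef]; exact hμ24)
    set S := (range (n+1)).filter
      (fun l : ℕ => 3/4*((n:ℝ)*p) ≤ (l:ℝ) ∧ (l:ℝ) ≤ 5/4*((n:ℝ)*p)) with hSdef
    have hSmem : ∀ l ∈ S, l ≤ n ∧ 3/4*μ ≤ (l:ℝ) ∧ (l:ℝ) ≤ 5/4*μ := by
      intro l hl
      rw [hSdef, Finset.mem_filter, Finset.mem_range] at hl
      exact ⟨by omega, hl.2.1, hl.2.2⟩
    have hS2k : ∀ l ∈ S, 2*k ≤ l := by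
      intro l hl
      have h := hSmem l hl
      have : ((2*k : ℕ):ℝ) ≤ (l:ℝ) := by push_cast; linarith [h.2.1]
      exact_mod_cast this
    have hSsub : S ⊆ Finset.Icc (2*k) n := by
      intro l hl
      rw [Finset.mem_Icc]
      exact ⟨hS2k l hl, (hSmem l hl).1⟩
    have hE8 : (2:ℝ)^(-((3*k:ℕ):ℝ)) = ((8:ℝ)^k)⁻¹ := by
      rw [two_rpow_neg_nat, pow_mul]; norm_num
    have hE1 : (2:ℝ)^k * (2:ℝ)^(-((3*k:ℕ):ℝ)) ≤ 1 := by
      rw [hE8, ← div_eq_mul_inv, div_le_one h8pos]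
      apply pow_le_pow_left₀ <;> norm_num
    have hterm : ∀ l ∈ S,
        Bf n p l * ((lam:ℝ)*((p/4)^k)/2) * ((lam:ℝ)*(p^k*(2:ℝ)^(-((3*k:ℕ):ℝ)))/2)
          ≤ (n.choose l : ℝ) * p ^ l * (1 - p) ^ (n - l)
            * (1 - (1 - ((n - k).choose (l - k) : ℝ) / (n.choose l : ℝ)) ^ lam)
            * (1 - (1 - p ^ k * (1 - p) ^ (l - k)) ^ lam) := by
      intro l hl
      obtain ⟨hln, hlo, hhi⟩ := hSmem l hl
      apply key l (hS2k l hl) hln (by linarith) _ _ hE1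
      have hsub : ((l - k:ℕ):ℝ) ≤ (l:ℝ) := by
        exact_mod_cast Nat.cast_le.2 (Nat.sub_le l k)
      have : 2*p*((l-k:ℕ):ℝ) ≤ 2*p*(l:ℝ) := by nlinarith [hppos.le, hsub]
      push_cast
      nlinarith [this, hμp, hppos, hk0, hhi]
    have habpos : (0:ℝ) ≤ ((lam:ℝ)*((p/4)^k)/2) * ((lam:ℝ)*(p^k*(2:ℝ)^(-((3*k:ℕ):ℝ)))/2) := by
      have := Real.rpow_nonneg (by norm_num : (0:ℝ) ≤ 2) (-((3*k:ℕ):ℝ))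
      positivity
    have heq1 : (1:ℝ)/3 * (((lam:ℝ)*((p/4)^k)/2) * ((lam:ℝ)*(p^k*(2:ℝ)^(-((3*k:ℕ):ℝ)))/2))
        = (lam:ℝ)^2 * x^k / (12*32^k) := by
      rw [hE8, hxk, h32, div_pow]
      ring
    calc (lam:ℝ)^2 * x^k / (40*32^k) ≤ (lam:ℝ)^2 * x^k / (12*32^k) := by
          apply div_le_div_of_nonneg_left (by positivity) (by positivity)
          nlinarith [h32, h4pos, h8pos]
      _ = (1:ℝ)/3 * (((lam:ℝ)*((p/4)^k)/2) * ((lam:ℝ)*(p^k*(2:ℝ)^(-((3*k:ℕ):ℝ)))/2)) := heq1.symm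
      _ ≤ (∑ l ∈ S, Bf n p l) * (((lam:ℝ)*((p/4)^k)/2) * ((lam:ℝ)*(p^k*(2:ℝ)^(-((3*k:ℕ):ℝ)))/2)) :=
          mul_le_mul_of_nonneg_right hmass habpos
      _ = ∑ l ∈ S, Bf n p l * ((lam:ℝ)*((p/4)^k)/2) * ((lam:ℝ)*(p^k*(2:ℝ)^(-((3*k:ℕ):ℝ)))/2) := by
          rw [Finset.sum_mul]
          exact Finset.sum_congr rfl (fun l _ => by ring)
      _ ≤ ∑ l ∈ S, ((n.choose l : ℝ) * p ^ l * (1 - p) ^ (n - l)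
            * (1 - (1 - ((n - k).choose (l - k) : ℝ) / (n.choose l : ℝ)) ^ lam)
            * (1 - (1 - p ^ k * (1 - p) ^ (l - k)) ^ lam)) := Finset.sum_le_sum hterm
      _ ≤ P n k p p lam lam := hPlow S hSsub
  · -- regime 2 : single mode point
    have hk6 : 6 ≤ k := by omega
    have h8n : n + 1 ≤ 8*k := by omega
    have hn2k : (n:ℝ)+1 ≤ 2^k := by
      have h1 : n + 1 ≤ 2^k := le_trans h8n (eight_mul_le_two_pow k hk6)
      exact_mod_cast h1
    set m := Nat.floor ((n+1:ℝ)*p) with hmdef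
    have hmle : (m:ℝ) ≤ (n+1:ℝ)*p := Nat.floor_le (by positivity)
    have hmgt : (n+1:ℝ)*p < m + 1 := Nat.lt_floor_add_one _
    have hm2k : 2*k ≤ m := by
      apply Nat.le_floor
      push_cast
      nlinarith [hμ2k, hppos, hμdef.ge]
    have hmn : m ≤ n := by
      have h1 : (n+1:ℝ)*p < ((n+1 : ℕ) : ℝ) := by push_cast; nlinarith
      have h2 : m < n + 1 := (Nat.floor_lt (by positivity)).2 h1
      omega
    have hm4 : (k:ℝ) + μ/4 ≤ m := by
      have : μ ≤ (n+1:ℝ)*p := by rw [hμdef]; nlinarith [hppos]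
      linarith [hmgt, hμ2k, hμ24]
    have hE : 2*p*((m-k:ℕ):ℝ) ≤ ((2*k+2:ℕ):ℝ) := by
      have hsub : ((m - k:ℕ):ℝ) ≤ (n+1:ℝ)*p := by
        refine le_trans ?_ hmle
        exact_mod_cast Nat.cast_le.2 (Nat.sub_le m k)
      have h1 : 2*p*((m-k:ℕ):ℝ) ≤ 2*p*((n+1:ℝ)*p) :=
        mul_le_mul_of_nonneg_left hsub (by positivity)
      have h2 : 2*p*((n+1:ℝ)*p) = 2*(μ*p) + 2*p^2 := by rw [hμdef]; ring
      rw [h2, hμp, hp2] at h1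
      push_cast
      linarith [h1, hx4]
    have hE2 : (2:ℝ)^(-((2*k+2:ℕ):ℝ)) = ((2:ℝ)^(2*k+2))⁻¹ := two_rpow_neg_nat _
    have h2k2pos : (0:ℝ) < (2:ℝ)^(2*k+2) := by positivity
    have hE1 : (2:ℝ)^k * (2:ℝ)^(-((2*k+2:ℕ):ℝ)) ≤ 1 := by
      rw [hE2, ← div_eq_mul_inv, div_le_one h2k2pos]
      apply pow_le_pow_right₀ (by norm_num) (by omega)
    have hBfm : 1/((n:ℝ)+1) ≤ Bf n p m := by
      have hmode := Bf_mode_ge n p hp0 hp1 hnn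
      rw [div_le_iff₀ (by positivity)]
      nlinarith [hmode]
    have habpos : (0:ℝ) ≤ ((lam:ℝ)*((p/4)^k)/2) * ((lam:ℝ)*(p^k*(2:ℝ)^(-((2*k+2:ℕ):ℝ)))/2) := by
      have := Real.rpow_nonneg (by norm_num : (0:ℝ) ≤ 2) (-((2*k+2:ℕ):ℝ))
      positivity
    have h2kk : (2:ℝ)^(2*k+2) = 4*(4^k) := by
      rw [pow_add, pow_mul]; norm_num [mul_comm]
    have hW : (((lam:ℝ)*((p/4)^k)/2) * ((lam:ℝ)*(p^k*(2:ℝ)^(-((2*k+2:ℕ):ℝ)))/2))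
        = (lam:ℝ)^2 * x^k / (16*16^k) := by
      rw [hE2, h2kk, hxk, h16, div_pow]
      ring
    have hcomb : (1/((n:ℝ)+1)) * ((lam:ℝ)^2 * x^k / (16*16^k))
        = (lam:ℝ)^2 * x^k / (((n:ℝ)+1)*(16*16^k)) := by
      rw [div_mul_div_comm, one_mul]
    have h16pos : (0:ℝ) < (16:ℝ)^k := by positivity
    have hden : ((n:ℝ)+1)*(16*16^k) ≤ 40*32^k := by
      have h3216 : (32:ℝ)^k = 2^k*16^k := by rw [← mul_pow]; norm_num
      have hmul : ((n:ℝ)+1)*16^k ≤ 2^k*16^k := mul_le_mul_of_nonneg_right hn2k h16pos.le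
      rw [h3216]
      linarith [hmul, mul_pos h2pos h16pos]
    have hsingle : ({m} : Finset ℕ) ⊆ Finset.Icc (2*k) n := by
      simp [Finset.singleton_subset_iff, Finset.mem_Icc, hm2k, hmn]
    calc (lam:ℝ)^2 * x^k / (40*32^k)
        ≤ (lam:ℝ)^2 * x^k / (((n:ℝ)+1)*(16*16^k)) := by
          apply div_le_div_of_nonneg_left (by positivity) (by positivity) hden
      _ = (1/((n:ℝ)+1)) * ((lam:ℝ)^2 * x^k / (16*16^k)) := hcomb.symm
      _ = (1/((n:ℝ)+1)) * (((lam:ℝ)*((p/4)^k)/2) * ((lam:ℝ)*(p^k*(2:ℝ)^(-((2*k+2:ℕ):ℝ)))/2)) := by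
          rw [hW]
      _ ≤ Bf n p m * (((lam:ℝ)*((p/4)^k)/2) * ((lam:ℝ)*(p^k*(2:ℝ)^(-((2*k+2:ℕ):ℝ)))/2)) :=
          mul_le_mul_of_nonneg_right hBfm habpos
      _ = Bf n p m * ((lam:ℝ)*((p/4)^k)/2) * ((lam:ℝ)*(p^k*(2:ℝ)^(-((2*k+2:ℕ):ℝ)))/2) := by ring
      _ ≤ (n.choose m : ℝ) * p ^ m * (1 - p) ^ (n - m)
            * (1 - (1 - ((n - k).choose (m - k) : ℝ) / (n.choose m : ℝ)) ^ lam)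
            * (1 - (1 - p ^ k * (1 - p) ^ (m - k)) ^ lam) :=
          key m hm2k hmn hm4 _ hE hE1
      _ = ∑ l ∈ ({m} : Finset ℕ), ((n.choose l : ℝ) * p ^ l * (1 - p) ^ (n - l)
            * (1 - (1 - ((n - k).choose (l - k) : ℝ) / (n.choose l : ℝ)) ^ lam)
            * (1 - (1 - p ^ k * (1 - p) ^ (l - k)) ^ lam)) := (Finset.sum_singleton _ _).symm
      _ ≤ P n k p p lam lam := hPlow {m} hsingle
end

section
/- For all natural numbers n and k with 1 ≤ k and 4k ≤ n, all reals p, c ∈ [0,1], and all natural numbers λ_M, λ_C ≥ 1: P(n,k,p,c,λ_M,λ_C) ≤ λ_M·(λ_C + 1)·(k/(2n))^k. (Hence the probability that the (1+(λ,λ)) GA, started in the local optimum of Jump_k, finds the global optimum in one iteration is at most λ_M(λ_C+1)(k/(2n))^k, for every choice of the parameters.) -/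
lemma bern10 (x : ℝ) (hx1 : x ≤ 1) (m : ℕ) : 1 - (1-x)^m ≤ m * x := by
  have h := one_add_mul_le_pow (a := -x) (by linarith) m
  have e : (1 : ℝ) + -x = 1 - x := by ring
  rw [e] at h
  nlinarith

lemma key10 (n k : ℕ) (hk : 1 ≤ k) (hkn : 4*k ≤ n) (q : ℝ) (h0 : 0 ≤ q) (h1 : q ≤ 1) :
    q^k * (1-q)^(n-k) ≤ ((k:ℝ)/(2*(n:ℝ)))^k := by
  have hkR : (0:ℝ) < k := by exact_mod_cast hk
  have hnR : (4:ℝ) * k ≤ n := by exact_mod_cast hkn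
  have hnk0 : (0:ℝ) < (n:ℝ) - k := by nlinarith
  have hcast : ((n - k : ℕ) : ℝ) = (n:ℝ) - (k:ℝ) := by
    have : k ≤ n := by omega
    exact Nat.cast_sub this
  have s1 : (1-q)^(n-k) ≤ Real.exp (-q) ^ (n-k) := by
    apply pow_le_pow_left₀ (by linarith)
    have := Real.add_one_le_exp (-q); linarith
  have s2 : Real.exp (-q) ^ (n-k) = Real.exp (-(q * ((n:ℝ)-k))) := by
    rw [← Real.exp_nat_mul, hcast]; ring_nf
  set t : ℝ := q * ((n:ℝ)-k) / k with ht
  have ht0 : 0 ≤ t := by positivity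
  have hxe : t * Real.exp (-t) ≤ Real.exp (-1) := by
    have h := Real.add_one_le_exp (t - 1)
    have h2 : t ≤ Real.exp t * Real.exp (-1) := by
      have e : t + -1 = t - 1 := by ring
      rw [← Real.exp_add, e]; simpa using h
    have h3 : t * Real.exp (-t) ≤ Real.exp t * Real.exp (-1) * Real.exp (-t) :=
      mul_le_mul_of_nonneg_right h2 (Real.exp_nonneg _)
    calc t * Real.exp (-t) ≤ Real.exp t * Real.exp (-1) * Real.exp (-t) := h3
      _ = Real.exp (-1) := by rw [mul_comm (Real.exp t), mul_assoc, ← Real.exp_add]; simp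
  have s3 : q^k * Real.exp (-(q * ((n:ℝ)-k))) = (q * Real.exp (-t))^k := by
    rw [mul_pow, ← Real.exp_nat_mul]
    congr 2
    field_simp [ht]
    rw [ht]; field_simp
  have s4 : q * Real.exp (-t) ≤ (k:ℝ)/(2*(n:ℝ)) := by
    have hq : q = t * (k / ((n:ℝ)-k)) := by field_simp [ht]; rw [ht]; field_simp
    have e1 : q * Real.exp (-t) = (t * Real.exp (-t)) * (k / ((n:ℝ)-k)) := by
      rw [hq]; ring
    rw [e1]
    have h2 : (t * Real.exp (-t)) * (k / ((n:ℝ)-k)) ≤ Real.exp (-1) * (k / ((n:ℝ)-k)) :=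
      mul_le_mul_of_nonneg_right hxe (by positivity)
    refine h2.trans ?_
    have he : (2.7182818283 : ℝ) < Real.exp 1 := Real.exp_one_gt_d9
    have hek : (0:ℝ) < Real.exp 1 := Real.exp_pos 1
    rw [Real.exp_neg]
    have e2 : (Real.exp 1)⁻¹ * ((k:ℝ) / ((n:ℝ) - k)) = (k:ℝ) / (Real.exp 1 * ((n:ℝ)-k)) := by
      field_simp
    have h2n : 2*(n:ℝ) ≤ Real.exp 1 * ((n:ℝ)-k) := by nlinarith
    rw [e2, div_le_div_iff₀ (mul_pos hek hnk0) (by nlinarith)]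
    nlinarith [mul_le_mul_of_nonneg_left h2n hkR.le]
  calc q^k * (1-q)^(n-k) ≤ q^k * Real.exp (-q) ^ (n-k) :=
        mul_le_mul_of_nonneg_left s1 (by positivity)
    _ = (q * Real.exp (-t))^k := by rw [s2, s3]
    _ ≤ ((k:ℝ)/(2*(n:ℝ)))^k := pow_le_pow_left₀ (by positivity) s4 k

lemma choose_sub_le10 (n k l : ℕ) (hk : k ≤ l) (hl : l ≤ n) :
    (n-k).choose (l-k) ≤ n.choose l := by
  rw [← Nat.choose_symm (show l-k ≤ n-k by omega), ← Nat.choose_symm hl]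
  have h : n - k - (l - k) = n - l := by omega
  rw [h]
  exact Nat.choose_le_choose _ (Nat.sub_le n k)

lemma summand_le10 (n k l lM lC : ℕ) (hkl : k + 1 ≤ l) (hln : l ≤ n) (hlM : 1 ≤ lM)
    (p c : ℝ) (hp0 : 0 ≤ p) (hp1 : p ≤ 1) (hc0 : 0 ≤ c) (hc1 : c ≤ 1)
    (F : ℝ) (hF : F ≤ (lM:ℝ) * (((n-k).choose (l-k) : ℝ) / (n.choose l : ℝ)))
    (hF0 : 0 ≤ F) :
    (n.choose l : ℝ) * p ^ l * (1 - p) ^ (n - l) * F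
        * (1 - (1 - c ^ k * (1 - c) ^ (l - k)) ^ lC)
    ≤ (lM:ℝ) * (lC:ℝ) * (((n-k).choose (l-k) : ℝ)) * p^l * (1-p)^(n-l)
        * (c^k * (1-c)^(l-k)) := by
  have hCl : (0:ℝ) < (n.choose l : ℝ) := by
    exact_mod_cast Nat.choose_pos hln
  have hs0 : 0 ≤ c^k * (1-c)^(l-k) :=
    mul_nonneg (pow_nonneg hc0 _) (pow_nonneg (by linarith) _)
  have hs1 : c^k * (1-c)^(l-k) ≤ 1 := by
    calc c^k * (1-c)^(l-k) ≤ 1 * 1 := by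
          apply mul_le_mul (pow_le_one₀ hc0 hc1) (pow_le_one₀ (by linarith) (by linarith))
            (pow_nonneg (by linarith) _) zero_le_one
      _ = 1 := by ring
  have hG : 1 - (1 - c ^ k * (1 - c) ^ (l - k)) ^ lC ≤ (lC:ℝ) * (c^k * (1-c)^(l-k)) :=
    bern10 _ hs1 lC
  have hG0 : 0 ≤ 1 - (1 - c ^ k * (1 - c) ^ (l - k)) ^ lC := by
    have := pow_le_one₀ (show (0:ℝ) ≤ 1 - c^k*(1-c)^(l-k) by linarith) (by linarith)
      (n := lC)
    linarith
  have hA0 : 0 ≤ (n.choose l : ℝ) * p ^ l * (1 - p) ^ (n - l) :=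
    mul_nonneg (mul_nonneg hCl.le (pow_nonneg hp0 _)) (pow_nonneg (by linarith) _)
  calc (n.choose l : ℝ) * p ^ l * (1 - p) ^ (n - l) * F
        * (1 - (1 - c ^ k * (1 - c) ^ (l - k)) ^ lC)
      ≤ (n.choose l : ℝ) * p ^ l * (1 - p) ^ (n - l)
          * ((lM:ℝ) * (((n-k).choose (l-k) : ℝ) / (n.choose l : ℝ)))
          * ((lC:ℝ) * (c^k * (1-c)^(l-k))) := by
        apply mul_le_mul (mul_le_mul_of_nonneg_left hF hA0) hG hG0
        have : 0 ≤ (lM:ℝ) * (((n-k).choose (l-k) : ℝ) / (n.choose l : ℝ)) := by positivity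
        exact mul_nonneg hA0 this
    _ = (lM:ℝ) * (lC:ℝ) * (((n-k).choose (l-k) : ℝ)) * p^l * (1-p)^(n-l)
          * (c^k * (1-c)^(l-k)) := by
        field_simp

theorem stmt_10 (n k : ℕ) (hk : 1 ≤ k) (hkn : 4 * k ≤ n)
    (p c : ℝ) (hp0 : 0 ≤ p) (hp1 : p ≤ 1) (hc0 : 0 ≤ c) (hc1 : c ≤ 1)
    (lM lC : ℕ) (hlM : 1 ≤ lM) (hlC : 1 ≤ lC) :
    P n k p c lM lC ≤ (lM : ℝ) * ((lC : ℝ) + 1) * ((k : ℝ) / (2 * (n : ℝ))) ^ k := by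
  have hknn : k ≤ n := by omega
  set B : ℝ := ((k:ℝ) / (2 * (n:ℝ))) ^ k with hBdef
  have hB0 : 0 ≤ B := by positivity
  -- Term 1
  have hC1 : (1:ℝ) ≤ (n.choose k : ℝ) := by
    exact_mod_cast Nat.choose_pos hknn
  have hT1 : (n.choose k : ℝ) * p ^ k * (1 - p) ^ (n - k)
      * (1 - (1 - 1 / (n.choose k : ℝ)) ^ lM) ≤ (lM:ℝ) * B := by
    have hb := bern10 (1/(n.choose k:ℝ)) (by rw [div_le_one (by linarith)]; linarith) lM
    have hA0 : 0 ≤ (n.choose k : ℝ) * p ^ k * (1 - p) ^ (n - k) :=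
      mul_nonneg (mul_nonneg (by linarith) (pow_nonneg hp0 _)) (pow_nonneg (by linarith) _)
    calc (n.choose k : ℝ) * p ^ k * (1 - p) ^ (n - k) * (1 - (1 - 1 / (n.choose k : ℝ)) ^ lM)
        ≤ (n.choose k : ℝ) * p ^ k * (1 - p) ^ (n - k) * ((lM:ℝ) * (1/(n.choose k:ℝ))) :=
          mul_le_mul_of_nonneg_left hb hA0
      _ = (lM:ℝ) * (p ^ k * (1 - p) ^ (n - k)) := by
          field_simp
      _ ≤ (lM:ℝ) * B :=
          mul_le_mul_of_nonneg_left (key10 n k hk hkn p hp0 hp1) (by positivity)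
  -- the bounding summand
  set b : ℕ → ℝ := fun l => (lM:ℝ) * (lC:ℝ) * (((n-k).choose (l-k) : ℝ)) * p^l * (1-p)^(n-l)
      * (c^k * (1-c)^(l-k)) with hbdef
  have hbnn : ∀ l, 0 ≤ b l := by
    intro l
    apply mul_nonneg
    apply mul_nonneg
    apply mul_nonneg (by positivity) (pow_nonneg hp0 _)
    · exact pow_nonneg (by linarith) _
    · exact mul_nonneg (pow_nonneg hc0 _) (pow_nonneg (by linarith) _)
  have hratio : ∀ l, k + 1 ≤ l → l ≤ n →
      ((n-k).choose (l-k) : ℝ) / (n.choose l : ℝ) ≤ 1 ∧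
      0 ≤ ((n-k).choose (l-k) : ℝ) / (n.choose l : ℝ) := by
    intro l h1 h2
    have hCl : (0:ℝ) < (n.choose l : ℝ) := by exact_mod_cast Nat.choose_pos h2
    constructor
    · rw [div_le_one hCl]
      exact_mod_cast choose_sub_le10 n k l (by omega) h2
    · positivity
  -- bound the two sums
  have hS2 : ∑ l ∈ Finset.Icc (k + 1) (2 * k - 1),
      (n.choose l : ℝ) * p ^ l * (1 - p) ^ (n - l)
        * (((n - k).choose (l - k) : ℝ) / (n.choose l : ℝ)) ^ lM
        * (1 - (1 - c ^ k * (1 - c) ^ (l - k)) ^ lC)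
      ≤ ∑ l ∈ Finset.Icc (k + 1) (2 * k - 1), b l := by
    apply Finset.sum_le_sum
    intro l hl
    rw [Finset.mem_Icc] at hl
    have hln : l ≤ n := by omega
    obtain ⟨hr1, hr0⟩ := hratio l hl.1 hln
    apply summand_le10 n k l lM lC hl.1 hln hlM p c hp0 hp1 hc0 hc1
    · calc (((n - k).choose (l - k) : ℝ) / (n.choose l : ℝ)) ^ lM
          ≤ ((n - k).choose (l - k) : ℝ) / (n.choose l : ℝ) := pow_le_of_le_one hr0 hr1 (by omega)
        _ ≤ (lM:ℝ) * (((n - k).choose (l - k) : ℝ) / (n.choose l : ℝ)) := by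
            have h1 : (1:ℝ) ≤ lM := by exact_mod_cast hlM
            nlinarith
    · positivity
  have hS3 : ∑ l ∈ Finset.Icc (2 * k) n,
      (n.choose l : ℝ) * p ^ l * (1 - p) ^ (n - l)
        * (1 - (1 - ((n - k).choose (l - k) : ℝ) / (n.choose l : ℝ)) ^ lM)
        * (1 - (1 - c ^ k * (1 - c) ^ (l - k)) ^ lC)
      ≤ ∑ l ∈ Finset.Icc (2 * k) n, b l := by
    apply Finset.sum_le_sum
    intro l hl
    rw [Finset.mem_Icc] at hl
    have hkl : k + 1 ≤ l := by omega
    obtain ⟨hr1, hr0⟩ := hratio l hkl hl.2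
    apply summand_le10 n k l lM lC hkl hl.2 hlM p c hp0 hp1 hc0 hc1
    · exact bern10 _ hr1 lM
    · have := pow_le_one₀ (show (0:ℝ) ≤ 1 - ((n - k).choose (l - k) : ℝ) / (n.choose l : ℝ)
        by linarith) (by linarith) (n := lM)
      linarith
  -- combine the two sums into one over Icc (k+1) n
  have hdisj : Disjoint (Finset.Icc (k + 1) (2 * k - 1)) (Finset.Icc (2 * k) n) := by
    apply Finset.disjoint_left.mpr
    intro a ha hb
    rw [Finset.mem_Icc] at ha hb
    omega
  have hunion : (∑ l ∈ Finset.Icc (k + 1) (2 * k - 1), b l)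
      + (∑ l ∈ Finset.Icc (2 * k) n, b l) ≤ ∑ l ∈ Finset.Icc (k + 1) n, b l := by
    rw [← Finset.sum_union hdisj]
    apply Finset.sum_le_sum_of_subset_of_nonneg
    · apply Finset.union_subset
      · exact Finset.Icc_subset_Icc (le_refl _) (by omega)
      · exact Finset.Icc_subset_Icc (by omega) (le_refl _)
    · intro l _ _; exact hbnn l
  -- reindex and use binomial theorem
  have hrein : ∑ l ∈ Finset.Icc (k + 1) n, b l = ∑ m ∈ Finset.Icc 1 (n - k), b (k + m) := by
    have h1 : Finset.Icc (k+1) n = Finset.map (addLeftEmbedding k) (Finset.Icc 1 (n-k)) := by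
      rw [Finset.map_add_left_Icc]
      congr 1
      omega
    rw [h1, Finset.sum_map]
    rfl
  have hbval : ∀ m, b (k + m) = (lM:ℝ) * (lC:ℝ) * (c^k * p^k)
      * (((n-k).choose m : ℝ) * (p * (1-c))^m * (1-p)^((n-k)-m)) := by
    intro m
    rw [hbdef]
    simp only [Nat.add_sub_cancel_left]
    have h2 : n - (k + m) = (n - k) - m := by omega
    rw [h2, pow_add, mul_pow]
    ring
  have hbinsum : ∑ m ∈ Finset.Icc 1 (n - k),
      (((n-k).choose m : ℝ) * (p * (1-c))^m * (1-p)^((n-k)-m))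
      ≤ (1 - p*c) ^ (n - k) := by
    have hbt : (p * (1-c) + (1-p)) ^ (n-k)
        = ∑ m ∈ Finset.range ((n-k)+1), (p*(1-c))^m * (1-p)^((n-k)-m) * ((n-k).choose m) :=
      add_pow _ _ _
    have heq : p * (1-c) + (1-p) = 1 - p*c := by ring
    rw [← heq]
    rw [hbt]
    have hsub : Finset.Icc 1 (n-k) ⊆ Finset.range ((n-k)+1) := by
      intro a ha
      rw [Finset.mem_Icc] at ha
      rw [Finset.mem_range]
      omega
    calc ∑ m ∈ Finset.Icc 1 (n - k),
          (((n-k).choose m : ℝ) * (p * (1-c))^m * (1-p)^((n-k)-m))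
        ≤ ∑ m ∈ Finset.range ((n-k)+1),
          (((n-k).choose m : ℝ) * (p * (1-c))^m * (1-p)^((n-k)-m)) := by
          apply Finset.sum_le_sum_of_subset_of_nonneg hsub
          intro m _ _
          have : 0 ≤ p * (1-c) := mul_nonneg hp0 (by linarith)
          exact mul_nonneg (mul_nonneg (by positivity) (pow_nonneg this _))
            (pow_nonneg (by linarith) _)
      _ = ∑ m ∈ Finset.range ((n-k)+1), (p*(1-c))^m * (1-p)^((n-k)-m) * ((n-k).choose m) := by
          apply Finset.sum_congr rfl
          intro m _
          ring
  have hkey : (p*c)^k * (1 - p*c)^(n-k) ≤ B :=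
    key10 n k hk hkn (p*c) (mul_nonneg hp0 hc0) (by nlinarith)
  have hS23 : ∑ l ∈ Finset.Icc (k + 1) n, b l ≤ (lM:ℝ) * (lC:ℝ) * B := by
    rw [hrein]
    calc ∑ m ∈ Finset.Icc 1 (n - k), b (k + m)
        = (lM:ℝ) * (lC:ℝ) * (c^k * p^k) * ∑ m ∈ Finset.Icc 1 (n - k),
            (((n-k).choose m : ℝ) * (p * (1-c))^m * (1-p)^((n-k)-m)) := by
          rw [Finset.mul_sum]
          exact Finset.sum_congr rfl fun m _ => hbval m
      _ ≤ (lM:ℝ) * (lC:ℝ) * (c^k * p^k) * (1 - p*c) ^ (n - k) := by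
          apply mul_le_mul_of_nonneg_left hbinsum
          positivity
      _ = (lM:ℝ) * (lC:ℝ) * ((p*c)^k * (1 - p*c)^(n-k)) := by
          rw [mul_pow]; ring
      _ ≤ (lM:ℝ) * (lC:ℝ) * B := mul_le_mul_of_nonneg_left hkey (by positivity)
  -- put everything together
  have hfinal : (lM:ℝ) * ((lC:ℝ) + 1) * B = (lM:ℝ) * B + (lM:ℝ) * (lC:ℝ) * B := by ring
  unfold P
  rw [hfinal]
  linarith
end

section
/- For all natural numbers n and k with 1 ≤ k ≤ n-1 and 2k ≤ n, and every real x ∈ [0,1]: x^k·(1-x)^{n-k} ≤ (k/(2n))^k. -/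
theorem stmt_13 (n k : ℕ) (hk : 1 ≤ k) (hkn : k ≤ n - 1) (h2k : 2 * k ≤ n)
    (x : ℝ) (hx0 : 0 ≤ x) (hx1 : x ≤ 1) :
    x ^ k * (1 - x) ^ (n - k) ≤ ((k : ℝ) / (2 * (n : ℝ))) ^ k := by
  set m := n - k with hm
  have hkm : k ≤ m := by omega
  have hnkm : n = k + m := by omega
  have hK : (1:ℝ) ≤ (k:ℝ) := by exact_mod_cast hk
  have hM : (k:ℝ) ≤ (m:ℝ) := by exact_mod_cast hkm
  have hK0 : (0:ℝ) < k := by linarith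
  have hM0 : (0:ℝ) < m := by linarith
  have hN : (n:ℝ) = (k:ℝ) + m := by exact_mod_cast hnkm
  have hN0 : (0:ℝ) < n := by rw [hN]; linarith
  have hx1' : (0:ℝ) ≤ 1 - x := by linarith
  -- Step 1: AM-GM
  have lem1 : x ^ k * (1 - x) ^ m ≤ ((k:ℝ)/n) ^ k * ((m:ℝ)/n) ^ m := by
    set p₁ : ℝ := n * x / k with hp₁def
    set p₂ : ℝ := n * (1 - x) / m with hp₂def
    have hp₁ : 0 ≤ p₁ := by positivity
    have hp₂ : 0 ≤ p₂ := by positivity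
    have hw : (k:ℝ)/n + (m:ℝ)/n = 1 := by field_simp [hN]; linarith
    have h := Real.geom_mean_le_arith_mean2_weighted
      (by positivity) (by positivity) hp₁ hp₂ hw
    have hsum : (k:ℝ)/n * p₁ + (m:ℝ)/n * p₂ = 1 := by
      rw [hp₁def, hp₂def]; field_simp; ring
    rw [hsum] at h
    have h2 : p₁ ^ (k:ℝ) * p₂ ^ (m:ℝ) ≤ 1 := by
      have h' := Real.rpow_le_rpow (by positivity) h (le_of_lt hN0)
      rwa [Real.mul_rpow (Real.rpow_nonneg hp₁ _) (Real.rpow_nonneg hp₂ _),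
        ← Real.rpow_mul hp₁, ← Real.rpow_mul hp₂,
        div_mul_cancel₀ _ hN0.ne', div_mul_cancel₀ _ hN0.ne',
        Real.one_rpow] at h'
    have h3 : p₁ ^ k * p₂ ^ m ≤ 1 := by
      rw [← Real.rpow_natCast p₁ k, ← Real.rpow_natCast p₂ m]; exact h2
    have hx_eq : x = (k:ℝ)/n * p₁ := by
      rw [hp₁def]; field_simp
    have hx_eq' : 1 - x = (m:ℝ)/n * p₂ := by
      rw [hp₂def]; field_simp
    calc x ^ k * (1 - x) ^ m
        = (((k:ℝ)/n) ^ k * ((m:ℝ)/n) ^ m) * (p₁ ^ k * p₂ ^ m) := by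
          conv_rhs => rw [mul_mul_mul_comm, ← mul_pow, ← mul_pow]
          rw [← hx_eq, ← hx_eq']
      _ ≤ ((k:ℝ)/n) ^ k * ((m:ℝ)/n) ^ m := by
          apply mul_le_of_le_one_right (by positivity) h3
  -- Step 2: Bernoulli
  have lem2 : ((m:ℝ)/n) ^ m ≤ ((1:ℝ)/2) ^ k := by
    have hb := one_add_mul_self_le_rpow_one_add
      (s := (k:ℝ)/m) (p := (m:ℝ)/k)
      (le_trans (by norm_num) (le_of_lt (div_pos hK0 hM0)))
      (by rw [le_div_iff₀ hK0]; linarith)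
    have heq : 1 + (m:ℝ)/k * ((k:ℝ)/m) = 2 := by field_simp; norm_num
    have heq2 : 1 + (k:ℝ)/m = (n:ℝ)/m := by rw [hN]; field_simp; ring
    rw [heq, heq2] at hb
    have h2n : (2:ℝ) ^ (k:ℝ) ≤ ((n:ℝ)/m) ^ (m:ℝ) := by
      have h' := Real.rpow_le_rpow (by norm_num) hb (le_of_lt hK0)
      rwa [← Real.rpow_mul (by positivity), div_mul_cancel₀ _ hK0.ne'] at h'
    have hinv : ((m:ℝ)/n) ^ (m:ℝ) ≤ ((1:ℝ)/2) ^ (k:ℝ) := by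
      rw [show (m:ℝ)/n = ((n:ℝ)/m)⁻¹ by rw [inv_div], one_div,
        Real.inv_rpow (by positivity), Real.inv_rpow (by norm_num)]
      exact inv_anti₀ (by positivity) h2n
    rw [← Real.rpow_natCast ((m:ℝ)/n) m, ← Real.rpow_natCast ((1:ℝ)/2) k]
    exact hinv
  calc x ^ k * (1 - x) ^ m
      ≤ ((k:ℝ)/n) ^ k * ((m:ℝ)/n) ^ m := lem1
    _ ≤ ((k:ℝ)/n) ^ k * ((1:ℝ)/2) ^ k := by
        apply mul_le_mul_of_nonneg_left lem2 (by positivity)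
    _ = ((k:ℝ) / (2 * (n:ℝ))) ^ k := by
        rw [← mul_pow]; congr 1; rw [div_mul_div_comm, mul_one, mul_comm (n:ℝ) 2]
end

section
/- For all natural numbers n and k with 2 ≤ k and 4k ≤ n, and all real numbers λ_M ≥ 1 and λ_C ≥ 1: max{λ_M + λ_C, (λ_M + λ_C)/(λ_M·(λ_C + 1)·(k/(2n))^k)} ≥ 2·(2n/k)^{k/2} - 1. (Since the per-iteration probability of leaving the local optimum of Jump_k is at most λ_M(λ_C+1)(k/(2n))^k, this shows that the expected number of fitness evaluations of the (1+(λ,λ)) GA started in the local optimum of Jump_k is at least 2(2n/k)^{k/2} - 1 for every choice of parameters.) -/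
theorem stmt_14 (n k : ℕ) (hk : 2 ≤ k) (hkn : 4 * k ≤ n)
    (lM lC : ℝ) (hlM : 1 ≤ lM) (hlC : 1 ≤ lC) :
    max (lM + lC) ((lM + lC) / (lM * (lC + 1) * ((k : ℝ) / (2 * (n : ℝ))) ^ k))
      ≥ 2 * ((2 * (n : ℝ)) / (k : ℝ)) ^ ((k : ℝ) / 2) - 1 := by
  have hk2 : (2:ℝ) ≤ (k:ℝ) := by exact_mod_cast hk
  have hkpos : (0:ℝ) < (k:ℝ) := by linarith
  have hkn' : (4:ℝ) * (k:ℝ) ≤ (n:ℝ) := by exact_mod_cast hkn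
  have hn : (8:ℝ) ≤ (n:ℝ) := by linarith
  set x : ℝ := (2 * (n:ℝ)) / (k:ℝ) with hxdef
  have hx8 : (8:ℝ) ≤ x := by
    rw [hxdef, le_div_iff₀ hkpos]; linarith
  set q : ℝ := x ^ ((k:ℝ)/2) with hqdef
  have hq8 : (8:ℝ) ≤ q := by
    calc (8:ℝ) ≤ x := hx8
    _ = x ^ (1:ℝ) := (Real.rpow_one x).symm
    _ ≤ q := Real.rpow_le_rpow_of_exponent_le (by linarith) (by linarith)
  have hq0 : (0:ℝ) < q := by linarith
  set p : ℝ := ((k:ℝ)/(2*(n:ℝ)))^k with hpdef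
  have hpq : p * q ^ 2 = 1 := by
    have hx0 : (0:ℝ) ≤ x := by linarith
    have hq2 : q ^ 2 = x ^ (k:ℕ) := by
      rw [hqdef, ← Real.rpow_natCast (x ^ ((k:ℝ)/2)) 2, ← Real.rpow_mul hx0,
        show ((k:ℝ)/2 * ((2:ℕ):ℝ)) = ((k:ℕ):ℝ) by push_cast; ring, Real.rpow_natCast]
    rw [hq2, hpdef, ← mul_pow]
    have hbx : (k:ℝ)/(2*(n:ℝ)) * x = 1 := by
      rw [hxdef]; field_simp
    rw [hbx, one_pow]
  have hp' : p = 1 / q ^ 2 := by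
    rw [eq_div_iff (by positivity)]; exact hpq
  have hp0 : (0:ℝ) < p := by rw [hp']; positivity
  set s : ℝ := lM + lC with hsdef
  have hs2 : (2:ℝ) ≤ s := by rw [hsdef]; linarith
  rcases le_or_gt (2*q - 1) s with h | h
  · exact le_max_of_le_left h
  · apply le_max_of_le_right
    have hB0 : 0 < lM * (lC + 1) * p := by positivity
    rw [le_div_iff₀ hB0]
    have hA : lM * (lC + 1) * p ≤ (s+1)^2 / (4*q^2) := by
      rw [hp', mul_one_div, div_le_div_iff₀ (by positivity) (by positivity)]
      simp only [hsdef]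
      nlinarith [mul_nonneg (sq_nonneg (lM - lC - 1)) (sq_nonneg q)]
    have h1 : (2*q-1) * (lM * (lC + 1) * p) ≤ (2*q-1) * ((s+1)^2 / (4*q^2)) :=
      mul_le_mul_of_nonneg_left hA (by linarith)
    have h2 : (2*q-1) * ((s+1)^2 / (4*q^2)) ≤ s := by
      rw [mul_div_assoc', div_le_iff₀ (by positivity)]
      nlinarith [mul_nonneg (show (0:ℝ) ≤ 2*q - 1 - s by linarith)
        (show (0:ℝ) ≤ (2*q-1)*(s+1) - 2*q by nlinarith)]
    linarith
end

section
/- For every real x with 1 ≤ x ≤ 9, one has x^{⌈x⌉}·e^{-x}/(⌈x⌉)! ≥ 0.12, where ⌈x⌉ denotes the ceiling of x. -/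
open Real

lemma mono_aux (a x : ℝ) (k : ℕ) (ha : 0 < a) (hax : a ≤ x) (hxk : x ≤ (k : ℝ)) :
    a ^ k * Real.exp (-a) ≤ x ^ k * Real.exp (-x) := by
  have hx : 0 < x := lt_of_lt_of_le ha hax
  have hk : 0 < (k : ℝ) := lt_of_lt_of_le hx hxk
  -- exp ((x-a)/x) ≤ x/a
  have h1 : Real.exp ((x - a) / x) ≤ x / a := by
    have h2 : a / x ≤ Real.exp ((a - x) / x) := by
      have := Real.add_one_le_exp ((a - x) / x)
      have : 1 + (a - x) / x ≤ Real.exp ((a - x) / x) := by linarith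
      calc a / x = 1 + (a - x) / x := by field_simp; ring
        _ ≤ _ := this
    have hax' : 0 < a / x := div_pos ha hx
    have h3 := inv_anti₀ hax' h2
    rw [← Real.exp_neg, ← neg_div, neg_sub, inv_div] at h3
    exact h3
  have h3 : Real.exp ((x - a) / (k : ℝ)) ≤ Real.exp ((x - a) / x) := by
    apply Real.exp_le_exp.2
    gcongr
    all_goals linarith
  have h4 : Real.exp (x - a) ≤ (x / a) ^ k := by
    have hk0 : (k : ℝ) ≠ 0 := ne_of_gt hk
    have : Real.exp (x - a) = Real.exp ((x - a) / (k : ℝ)) ^ k := by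
      rw [← Real.exp_nat_mul]
      congr 1
      field_simp
    rw [this]
    exact pow_le_pow_left₀ (Real.exp_pos _).le (h3.trans h1) k
  have key : a ^ k * Real.exp (x - a) ≤ x ^ k := by
    have := mul_le_mul_of_nonneg_left h4 (pow_nonneg ha.le k)
    calc a ^ k * Real.exp (x - a) ≤ a ^ k * (x / a) ^ k := this
      _ = x ^ k := by rw [div_pow]; field_simp
  have hexp : Real.exp (-a) = Real.exp (x - a) * Real.exp (-x) := by
    rw [← Real.exp_add]; ring_nf
  rw [hexp, ← mul_assoc]
  exact mul_le_mul_of_nonneg_right key (Real.exp_pos _).le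

lemma num_aux (m : ℕ) (x : ℝ) (hm : 0 < m) (hax : (m : ℝ) ≤ x) (hxk : x ≤ ((m + 1 : ℕ) : ℝ))
    (h : 0.12 * ((m + 1).factorial : ℝ) * (2.7182818286 : ℝ) ^ m ≤ (m : ℝ) ^ (m + 1)) :
    x ^ (m + 1) * Real.exp (-x) / ((m + 1).factorial : ℝ) ≥ 0.12 := by
  have hm' : (0 : ℝ) < m := by exact_mod_cast hm
  have hmono := mono_aux (m : ℝ) x (m + 1) hm' hax (by exact_mod_cast hxk)
  have hexp : Real.exp (-(m : ℝ)) = (Real.exp 1 ^ m)⁻¹ := by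
    rw [Real.exp_neg, ← Real.exp_nat_mul, mul_one]
  have hc : Real.exp 1 ^ m ≤ (2.7182818286 : ℝ) ^ m :=
    pow_le_pow_left₀ (Real.exp_pos 1).le Real.exp_one_lt_d9.le m
  have hcpos : (0 : ℝ) < (2.7182818286 : ℝ) ^ m := by positivity
  have hepos : (0 : ℝ) < Real.exp 1 ^ m := by positivity
  have hinv : ((2.7182818286 : ℝ) ^ m)⁻¹ ≤ (Real.exp 1 ^ m)⁻¹ :=
    inv_anti₀ hepos hc
  have hfpos : (0 : ℝ) < ((m + 1).factorial : ℝ) := by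
    exact_mod_cast Nat.factorial_pos (m + 1)
  rw [ge_iff_le, le_div_iff₀ hfpos]
  calc 0.12 * ((m + 1).factorial : ℝ)
      ≤ (m : ℝ) ^ (m + 1) * ((2.7182818286 : ℝ) ^ m)⁻¹ := by
        rw [← le_div_iff₀ hcpos, div_eq_mul_inv] at h
        exact h
    _ ≤ (m : ℝ) ^ (m + 1) * (Real.exp 1 ^ m)⁻¹ := by
        exact mul_le_mul_of_nonneg_left hinv (by positivity)
    _ = (m : ℝ) ^ (m + 1) * Real.exp (-(m : ℝ)) := by rw [hexp]
    _ ≤ x ^ (m + 1) * Real.exp (-x) := hmono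

theorem stmt_17 (x : ℝ) (hx1 : 1 ≤ x) (hx9 : x ≤ 9) :
    x ^ ⌈x⌉₊ * Real.exp (-x) / (Nat.factorial ⌈x⌉₊ : ℝ) ≥ 0.12 := by
  have hx0 : 0 < x := by linarith
  set n := ⌈x⌉₊ with hn
  have hn1 : 1 ≤ n := Nat.one_le_ceil_iff.2 hx0
  have hn9 : n ≤ 9 := Nat.ceil_le.2 (by norm_num; linarith)
  have hxn : x ≤ (n : ℝ) := Nat.le_ceil x
  have hlow : ∀ m : ℕ, m < n → (m : ℝ) < x := fun m hm => Nat.lt_ceil.1 (hn ▸ hm)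
  interval_cases n
  · -- n = 1 : x = 1
    have hx1' : x ≤ 1 := by exact_mod_cast hxn
    have : x = 1 := le_antisymm hx1' hx1
    subst this
    have := Real.exp_one_lt_d9
    have h1 : Real.exp (-1) = (Real.exp 1)⁻¹ := Real.exp_neg 1
    have h2 : (2.7182818286 : ℝ)⁻¹ ≤ (Real.exp 1)⁻¹ :=
      inv_anti₀ (Real.exp_pos 1) this.le
    simp only [pow_one, Nat.factorial_one, Nat.cast_one, div_one, one_mul]
    rw [h1]
    norm_num at h2 ⊢
    linarith
  · exact num_aux 1 x (by norm_num) (hlow 1 (by norm_num)).le (by exact_mod_cast hxn)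
      (by norm_num [Nat.factorial])
  · exact num_aux 2 x (by norm_num) (hlow 2 (by norm_num)).le (by exact_mod_cast hxn)
      (by norm_num [Nat.factorial])
  · exact num_aux 3 x (by norm_num) (hlow 3 (by norm_num)).le (by exact_mod_cast hxn)
      (by norm_num [Nat.factorial])
  · exact num_aux 4 x (by norm_num) (hlow 4 (by norm_num)).le (by exact_mod_cast hxn)
      (by norm_num [Nat.factorial])
  · exact num_aux 5 x (by norm_num) (hlow 5 (by norm_num)).le (by exact_mod_cast hxn)
      (by norm_num [Nat.factorial])
  · exact num_aux 6 x (by norm_num) (hlow 6 (by norm_num)).le (by exact_mod_cast hxn)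
      (by norm_num [Nat.factorial])
  · exact num_aux 7 x (by norm_num) (hlow 7 (by norm_num)).le (by exact_mod_cast hxn)
      (by norm_num [Nat.factorial])
  · exact num_aux 8 x (by norm_num) (hlow 8 (by norm_num)).le (by exact_mod_cast hxn)
      (by norm_num [Nat.factorial])
end

section
/- For all natural numbers n and k with 1 ≤ k and 4k ≤ n, every natural number ℓ with 1 ≤ ℓ ≤ (5/4)·√(nk), and every real λ_C ≥ √(n/k): setting c = √(k/n), one has 1 - (1 - c·(1-c)^{ℓ-1})^{λ_C} ≥ (1/2)·4^{-5k/4}, where the outer power with exponent λ_C and the power 4^{-5k/4} are real powers. -/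
lemma aux_exp_le (x : ℝ) (h0 : 0 ≤ x) (h2 : x ≤ 1/2) :
    Real.exp (-(x * Real.log 4)) ≤ 1 - x := by
  have hcvx := convexOn_exp.2 (Set.mem_univ (0:ℝ)) (Set.mem_univ (-Real.log 2))
    (show (0:ℝ) ≤ 1 - 2*x by linarith) (show (0:ℝ) ≤ 2*x by linarith) (by ring)
  simp only [smul_eq_mul, mul_zero, zero_add, Real.exp_zero, mul_one] at hcvx
  rw [Real.exp_neg, Real.exp_log (by norm_num : (0:ℝ) < 2)] at hcvx
  have hlog4 : Real.log 4 = 2 * Real.log 2 := by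
    rw [show (4:ℝ) = 2^2 by norm_num, Real.log_pow]; push_cast; ring
  have : -(x * Real.log 4) = 2*x * -Real.log 2 := by rw [hlog4]; ring
  rw [this]
  calc Real.exp (2*x * -Real.log 2) ≤ (1 - 2*x) + 2*x * (2:ℝ)⁻¹ := hcvx
    _ = 1 - x := by ring

theorem stmt_18 (n k : ℕ) (hk : 1 ≤ k) (hkn : 4 * k ≤ n)
    (l : ℕ) (hl1 : 1 ≤ l) (hl2 : (l : ℝ) ≤ (5 / 4) * Real.sqrt ((n : ℝ) * (k : ℝ)))
    (lC : ℝ) (hlC : Real.sqrt ((n : ℝ) / (k : ℝ)) ≤ lC) :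
    1 - (1 - Real.sqrt ((k : ℝ) / (n : ℝ))
          * (1 - Real.sqrt ((k : ℝ) / (n : ℝ))) ^ (l - 1)) ^ lC
      ≥ (1 / 2) * (4 : ℝ) ^ (-(5 * (k : ℝ)) / 4) := by
  have hk0 : (0:ℝ) < k := by exact_mod_cast hk
  have hn0 : (0:ℝ) < n := by
    have : (4:ℝ) * k ≤ n := by exact_mod_cast hkn
    linarith
  set c : ℝ := Real.sqrt ((k : ℝ) / (n : ℝ)) with hc
  have hc0 : 0 < c := Real.sqrt_pos.2 (div_pos hk0 hn0)
  have hch : c ≤ 1/2 := by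
    have h1 : (k:ℝ)/n ≤ 1/4 := by
      rw [div_le_div_iff₀ hn0 (by norm_num)]
      have : (4:ℝ) * k ≤ n := by exact_mod_cast hkn
      linarith
    calc c ≤ Real.sqrt (1/4) := Real.sqrt_le_sqrt h1
      _ = 1/2 := by
        rw [show (1/4:ℝ) = (1/2)^2 by norm_num, Real.sqrt_sq (by norm_num)]
  have hcinv : c * Real.sqrt ((n : ℝ) / (k : ℝ)) = 1 := by
    rw [hc, ← Real.sqrt_mul (by positivity)]
    rw [show (k:ℝ)/n * (n/k) = 1 by field_simp]
    exact Real.sqrt_one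
  have hlC0 : (0:ℝ) ≤ lC := by
    have := Real.sqrt_nonneg ((n:ℝ)/(k:ℝ)); linarith
  set p : ℝ := c * (1 - c) ^ (l - 1) with hp
  have h1c0 : (0:ℝ) ≤ 1 - c := by linarith
  have h1c1 : (1:ℝ) - c ≤ 1 := by linarith
  have hp0 : 0 ≤ p := by positivity
  have hp1 : p ≤ 1/2 := by
    have : (1-c)^(l-1) ≤ 1 := pow_le_one₀ h1c0 h1c1
    calc p ≤ c * 1 := by apply mul_le_mul_of_nonneg_left this (le_of_lt hc0)
      _ ≤ 1/2 := by linarith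
  set q : ℝ := (4:ℝ) ^ (-(5 * (k : ℝ)) / 4) with hq
  have hq0 : 0 < q := Real.rpow_pos_of_pos (by norm_num) _
  have hq1 : q ≤ 1 := by
    apply Real.rpow_le_one_of_one_le_of_nonpos (by norm_num)
    have : (0:ℝ) ≤ 5 * k := by positivity
    linarith
  -- key: q ≤ (1-c)^(l-1)
  have hcl : c * l ≤ 5/4 * k := by
    have h1 : c * l ≤ c * (5/4 * Real.sqrt ((n:ℝ) * k)) := by
      apply mul_le_mul_of_nonneg_left _ (le_of_lt hc0)
      exact hl2
    have h2 : c * Real.sqrt ((n:ℝ) * k) = k := by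
      rw [hc, ← Real.sqrt_mul (by positivity)]
      rw [show (k:ℝ)/n * (n*k) = k^2 by field_simp]
      exact Real.sqrt_sq (le_of_lt hk0)
    calc c * l ≤ c * (5/4 * Real.sqrt ((n:ℝ) * k)) := h1
      _ = 5/4 * (c * Real.sqrt ((n:ℝ) * k)) := by ring
      _ = 5/4 * k := by rw [h2]
  have hkey : q ≤ (1 - c) ^ (l - 1) := by
    have e1 : Real.exp (-(c * Real.log 4)) ^ l ≤ (1 - c) ^ l :=
      pow_le_pow_left₀ (Real.exp_nonneg _) (aux_exp_le c (le_of_lt hc0) hch) l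
    have e2 : (1 - c) ^ l ≤ (1 - c) ^ (l - 1) :=
      pow_le_pow_of_le_one h1c0 h1c1 (Nat.sub_le l 1)
    have e3 : q ≤ Real.exp (-(c * Real.log 4)) ^ l := by
      rw [← Real.exp_nat_mul]
      rw [hq, Real.rpow_def_of_pos (by norm_num : (0:ℝ) < 4)]
      apply Real.exp_le_exp.2
      have hlog4 : (0:ℝ) ≤ Real.log 4 := Real.log_nonneg (by norm_num)
      have : c * (l:ℝ) * Real.log 4 ≤ 5/4 * k * Real.log 4 :=
        mul_le_mul_of_nonneg_right hcl hlog4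
      nlinarith
    linarith
  have hpq : q ≤ p * lC := by
    have h1 : p * Real.sqrt ((n:ℝ)/(k:ℝ)) ≤ p * lC :=
      mul_le_mul_of_nonneg_left hlC hp0
    have h2 : p * Real.sqrt ((n:ℝ)/(k:ℝ)) = (1-c)^(l-1) := by
      rw [hp]
      calc c * (1-c)^(l-1) * Real.sqrt ((n:ℝ)/(k:ℝ))
          = (1-c)^(l-1) * (c * Real.sqrt ((n:ℝ)/(k:ℝ))) := by ring
        _ = (1-c)^(l-1) := by rw [hcinv, mul_one]
    linarith
  -- (1-p)^lC ≤ exp(-(p*lC))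
  have step1 : (1 - p) ^ lC ≤ Real.exp (-(p * lC)) := by
    have h1 : 1 - p ≤ Real.exp (-p) := by
      have := Real.add_one_le_exp (-p); linarith
    calc (1-p) ^ lC ≤ (Real.exp (-p)) ^ lC :=
          Real.rpow_le_rpow (by linarith) h1 hlC0
      _ = Real.exp (-(p * lC)) := by
          rw [← Real.exp_one_rpow (-p), ← Real.rpow_mul (le_of_lt (Real.exp_pos 1)),
            Real.exp_one_rpow]
          ring_nf
  have step2 : Real.exp (-(p * lC)) ≤ Real.exp (-q) := Real.exp_le_exp.2 (by linarith)
  have step3 : Real.exp (-q) ≤ 1 / (1 + q) := by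
    rw [Real.exp_neg]
    rw [inv_eq_one_div]
    apply one_div_le_one_div_of_le (by linarith)
    have := Real.add_one_le_exp q; linarith
  have step4 : 1 / (1 + q) ≤ 1 - q/2 := by
    rw [div_le_iff₀ (by linarith)]
    nlinarith
  have : (1 - p) ^ lC ≤ 1 - q/2 := by linarith
  rw [ge_iff_le]
  rw [hq] at this ⊢
  linarith
end

section
/- For all natural numbers n, k, d, ℓ with 1 ≤ k ≤ d ≤ n and √(nk) ≤ ℓ ≤ n, one has (in the real numbers) C(n-d, ℓ)/C(n, ℓ) ≤ 1 - (1/2)·min{1, k^{3/2}/√n}. -/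
lemma stepA (m l n : ℕ) (hmn : m ≤ n) :
    (m - 1).choose l * n ≤ m.choose l * (n - l) := by
  rcases Nat.eq_zero_or_pos m with hm | hm
  · subst hm
    cases l <;> simp
  · have key : (m - 1).choose l * m = m.choose l * (m - l) := by
      have := Nat.choose_mul_succ_eq (m - 1) l
      rwa [Nat.sub_add_cancel hm] at this
    have h2 : (m - l) * n ≤ (n - l) * m := by
      calc (m - l) * n = m * n - l * n := by rw [Nat.sub_mul]
        _ ≤ m * n - l * m := Nat.sub_le_sub_left (Nat.mul_le_mul_left l hmn) _
        _ = (n - l) * m := by rw [Nat.sub_mul, Nat.mul_comm m n]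
    have h3 : (m - 1).choose l * n * m ≤ m.choose l * (n - l) * m := by
      calc (m - 1).choose l * n * m = ((m - 1).choose l * m) * n := by ring
        _ = (m.choose l * (m - l)) * n := by rw [key]
        _ = m.choose l * ((m - l) * n) := by ring
        _ ≤ m.choose l * ((n - l) * m) := Nat.mul_le_mul_left _ h2
        _ = m.choose l * (n - l) * m := by ring
    exact Nat.le_of_mul_le_mul_right h3 hm

lemma stepB (n l : ℕ) : ∀ j, (n - j).choose l * n ^ j ≤ n.choose l * (n - l) ^ j
  | 0 => by simp
  | (j + 1) => by
    calc (n - (j + 1)).choose l * n ^ (j + 1)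
        = ((n - j) - 1).choose l * n * n ^ j := by
          rw [show n - (j + 1) = n - j - 1 from (Nat.sub_sub n j 1).symm]; ring
      _ ≤ ((n - j).choose l * (n - l)) * n ^ j :=
          Nat.mul_le_mul_right _ (stepA (n - j) l n (Nat.sub_le n j))
      _ = ((n - j).choose l * n ^ j) * (n - l) := by ring
      _ ≤ (n.choose l * (n - l) ^ j) * (n - l) :=
          Nat.mul_le_mul_right _ (stepB n l j)
      _ = n.choose l * (n - l) ^ (j + 1) := by ring

theorem stmt_19 (n k d l : ℕ) (hk : 1 ≤ k) (hkd : k ≤ d) (hdn : d ≤ n)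
    (hl1 : Real.sqrt ((n : ℝ) * (k : ℝ)) ≤ (l : ℝ)) (hl2 : l ≤ n) :
    ((n - d).choose l : ℝ) / (n.choose l : ℝ)
      ≤ 1 - (1 / 2) * min 1 ((k : ℝ) ^ ((3 : ℝ) / 2) / Real.sqrt (n : ℝ)) := by
  have hn : 1 ≤ n := le_trans hk (le_trans hkd hdn)
  have hn0 : (0 : ℝ) < n := by exact_mod_cast hn
  have hk0 : (0 : ℝ) < k := by exact_mod_cast hk
  have hln : (l : ℝ) ≤ n := by exact_mod_cast hl2
  have hchoose : (0 : ℝ) < n.choose l := by exact_mod_cast Nat.choose_pos hl2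
  -- natural-number inequality
  have hnat : (n - d).choose l * n ^ k ≤ n.choose l * (n - l) ^ k :=
    le_trans (Nat.mul_le_mul_right _ (Nat.choose_le_choose l (Nat.sub_le_sub_left hkd n)))
      (stepB n l k)
  -- step 1: ratio ≤ (1 - l/n)^k
  have step1 : ((n - d).choose l : ℝ) / (n.choose l : ℝ) ≤ (1 - (l : ℝ) / n) ^ k := by
    have hcast : ((n - d).choose l : ℝ) * (n : ℝ) ^ k ≤ (n.choose l : ℝ) * ((n : ℝ) - l) ^ k := by
      have := hnat
      have hc : ((n - l : ℕ) : ℝ) = (n : ℝ) - l := by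
        push_cast [Nat.cast_sub hl2]; ring
      calc ((n - d).choose l : ℝ) * (n : ℝ) ^ k
          = (((n - d).choose l * n ^ k : ℕ) : ℝ) := by push_cast; ring
        _ ≤ ((n.choose l * (n - l) ^ k : ℕ) : ℝ) := by exact_mod_cast this
        _ = (n.choose l : ℝ) * ((n : ℝ) - l) ^ k := by push_cast [Nat.cast_sub hl2]; ring
    have hb : (1 - (l : ℝ) / n) ^ k = ((n : ℝ) - l) ^ k / (n : ℝ) ^ k := by
      rw [← div_pow]
      congr 1
      field_simp
    rw [hb, div_le_div_iff₀ hchoose (by positivity)]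
    linarith [hcast]
  -- step 2: (1 - l/n)^k ≤ exp(-(l*k/n))
  have step2 : (1 - (l : ℝ) / n) ^ k ≤ Real.exp (-((l : ℝ) * k / n)) := by
    have hbase : 1 - (l : ℝ) / n ≤ Real.exp (-((l : ℝ) / n)) := by
      have := Real.add_one_le_exp (-((l : ℝ) / n))
      linarith
    have hbn : (0 : ℝ) ≤ 1 - (l : ℝ) / n := by
      rw [sub_nonneg, div_le_one hn0]; exact hln
    calc (1 - (l : ℝ) / n) ^ k ≤ Real.exp (-((l : ℝ) / n)) ^ k :=
          pow_le_pow_left₀ hbn hbase k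
      _ = Real.exp (-((l : ℝ) / n) * k) := by rw [← Real.exp_nat_mul]; ring_nf
      _ = Real.exp (-((l : ℝ) * k / n)) := by ring_nf
  set x : ℝ := (k : ℝ) ^ ((3 : ℝ) / 2) / Real.sqrt n with hxdef
  set t : ℝ := min 1 x with htdef
  have hsk : (0 : ℝ) ≤ Real.sqrt k := Real.sqrt_nonneg _
  have hsn : (0 : ℝ) < Real.sqrt n := Real.sqrt_pos.mpr hn0
  have hxval : x = (k : ℝ) * Real.sqrt k / Real.sqrt n := by
    have h32 : (k : ℝ) ^ ((3 : ℝ) / 2) = (k : ℝ) * Real.sqrt k := by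
      rw [Real.sqrt_eq_rpow, show (3 : ℝ) / 2 = 1 + 1 / 2 by norm_num, Real.rpow_add hk0,
        Real.rpow_one]
    rw [hxdef, h32]
  -- x ≤ l*k/n
  have hx_le : x ≤ (l : ℝ) * k / n := by
    have h1 : Real.sqrt n * Real.sqrt k ≤ l := by
      rw [← Real.sqrt_mul (le_of_lt hn0)]; exact hl1
    have hnsq : (n : ℝ) = Real.sqrt n * Real.sqrt n := (Real.mul_self_sqrt (le_of_lt hn0)).symm
    rw [hxval, div_le_div_iff₀ hsn hn0]
    calc (k : ℝ) * Real.sqrt k * n = (Real.sqrt n * Real.sqrt k) * (k * Real.sqrt n) := by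
          linear_combination ((k : ℝ) * Real.sqrt k) * hnsq
      _ ≤ (l : ℝ) * (k * Real.sqrt n) := by
          apply mul_le_mul_of_nonneg_right h1; positivity
      _ = (l : ℝ) * k * Real.sqrt n := by ring
  have ht0 : 0 ≤ t := le_min zero_le_one (by rw [hxval]; positivity)
  have ht1 : t ≤ 1 := min_le_left _ _
  have htle : t ≤ (l : ℝ) * k / n := le_trans (min_le_right _ _) hx_le
  -- step 3: exp(-(l*k/n)) ≤ 1 - t/2
  have step3 : Real.exp (-((l : ℝ) * k / n)) ≤ 1 - (1 / 2) * t := by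
    have h5 : Real.exp (-((l : ℝ) * k / n)) ≤ Real.exp (-t) :=
      Real.exp_le_exp.mpr (neg_le_neg htle)
    have h6 : t + 1 ≤ Real.exp t := Real.add_one_le_exp t
    have h7 : Real.exp (-t) * Real.exp t = 1 := by
      rw [← Real.exp_add]; simp
    have h8 : (0 : ℝ) < Real.exp (-t) := Real.exp_pos _
    nlinarith [mul_nonneg ht0 (sub_nonneg.mpr ht1), mul_pos h8 (by linarith : (0:ℝ) < t + 1)]
  calc ((n - d).choose l : ℝ) / (n.choose l : ℝ) ≤ (1 - (l : ℝ) / n) ^ k := step1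
    _ ≤ Real.exp (-((l : ℝ) * k / n)) := step2
    _ ≤ 1 - (1 / 2) * t := step3
end
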